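/- arXiv:1405.2946 — 4 statements merged into one kernel-verified Lean document; each statement's English description precedes it below -/
import Mathlib

section
/- Let U : Δ → B(X) be an evolution operator and P a projection valued function compatible with U such that ‖G(t,s)‖ ≤ M e^{αs} e^{ω|t−s|} for all t,s ≥ 0 with t ≠ s, for some ω > 0, α ≥ 0 and M ≥ 1. If there exist p ≥ 1, γ > α, ε ≥ 0 and D > 0 such that ∫₀^{+∞} e^{pγ|τ−t|·sign(τ−t)·sign(τ−t)} ‖G(τ,t)x‖^p dτ = ∫₀^{+∞} e^{pγ(τ−t)sign(τ−t)} ‖G(τ,t)x‖^p dτ ≤ D e^{pεt} ‖x‖^p for every t ≥ 0 and x ∈ X, then U has a nonuniform exponential dichotomy with projection valued function P, i.e. there exist ã,b̃ > 0, ε̃ ≥ 0 and N₁,N₂ ≥ 1 with ‖U(t,s)P(s)‖ ≤ N₁ e^{−ã(t−s)} e^{ε̃s} and ‖U_Q(s,t)Q(t)‖ ≤ N₂ e^{−b̃(t−s)} e^{ε̃t} for all t ≥ s ≥ 0. -/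
open Real MeasureTheory Filter

noncomputable section

/-- A growth rate: an increasing function `μ : [0,∞) → [1,∞)` with `μ 0 = 1` and
`μ t → ∞` as `t → ∞`. -/
def IsGrowthRate (μ : ℝ → ℝ) : Prop :=
  (∀ t, 0 ≤ t → 1 ≤ μ t) ∧ MonotoneOn μ (Set.Ici 0) ∧ μ 0 = 1 ∧
    Filter.Tendsto μ Filter.atTop Filter.atTop

variable {X : Type*} [NormedAddCommGroup X] [NormedSpace ℝ X]

/-- An evolution operator on `X`. -/
def IsEvolutionOperator (U : ℝ → ℝ → X →L[ℝ] X) : Prop :=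
  (∀ t, 0 ≤ t → U t t = 1) ∧
  (∀ s τ t, 0 ≤ s → s ≤ τ → τ ≤ t → (U t τ).comp (U τ s) = U t s) ∧
  (∀ x : X, ContinuousOn (fun q : ℝ × ℝ => U q.1 q.2 x) {q : ℝ × ℝ | 0 ≤ q.2 ∧ q.2 ≤ q.1})

/-- A (strongly continuous) projection valued function. -/
def IsProjectionValued (P : ℝ → X →L[ℝ] X) : Prop :=
  (∀ t, 0 ≤ t → (P t).comp (P t) = P t) ∧
  (∀ x : X, ContinuousOn (fun t => P t x) (Set.Ici 0))

/-- `P` is compatible with the evolution operator `U`; `V s t` plays the role of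
`U_Q(s,t)`, the inverse of the restriction `U(t,s)|_{Q(s)X} : Q(s)X → Q(t)X`,
where `Q t = 1 - P t`. -/
def CompatibleProjection (U V : ℝ → ℝ → X →L[ℝ] X) (P : ℝ → X →L[ℝ] X) : Prop :=
  (∀ s t, 0 ≤ s → s ≤ t → (P t).comp (U t s) = (U t s).comp (P s)) ∧
  (∀ s t, 0 ≤ s → s ≤ t → ∀ x : X,
    (1 - P s) (V s t ((1 - P t) x)) = V s t ((1 - P t) x)) ∧
  (∀ s t, 0 ≤ s → s ≤ t → ∀ x : X, U t s (V s t ((1 - P t) x)) = (1 - P t) x) ∧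
  (∀ s t, 0 ≤ s → s ≤ t → ∀ x : X, V s t (U t s ((1 - P s) x)) = (1 - P s) x)

/-- Nonuniform μ-dichotomy. -/
def NonuniformMuDichotomy (μ : ℝ → ℝ) (U V : ℝ → ℝ → X →L[ℝ] X)
    (P : ℝ → X →L[ℝ] X) : Prop :=
  ∃ a b ε N₁ N₂ : ℝ, 0 < a ∧ 0 < b ∧ 0 ≤ ε ∧ 1 ≤ N₁ ∧ 1 ≤ N₂ ∧
    ∀ s t, 0 ≤ s → s ≤ t →
      ‖(U t s).comp (P s)‖ ≤ N₁ * (μ t / μ s) ^ (-a) * μ s ^ ε ∧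
      ‖(V s t).comp (1 - P t)‖ ≤ N₂ * (μ t / μ s) ^ (-b) * μ t ^ ε

/-- Uniform μ-dichotomy (the case ε = 0). -/
def UniformMuDichotomy (μ : ℝ → ℝ) (U V : ℝ → ℝ → X →L[ℝ] X)
    (P : ℝ → X →L[ℝ] X) : Prop :=
  ∃ a b N₁ N₂ : ℝ, 0 < a ∧ 0 < b ∧ 1 ≤ N₁ ∧ 1 ≤ N₂ ∧
    ∀ s t, 0 ≤ s → s ≤ t →
      ‖(U t s).comp (P s)‖ ≤ N₁ * (μ t / μ s) ^ (-a) ∧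
      ‖(V s t).comp (1 - P t)‖ ≤ N₂ * (μ t / μ s) ^ (-b)

/-- The Green function associated to `U` and `P`:
`G(t,s) = U(t,s)P(s)` for `t > s` and `G(t,s) = -U_Q(t,s)Q(s)` for `t < s`. -/
def greenFunction (U V : ℝ → ℝ → X →L[ℝ] X) (P : ℝ → X →L[ℝ] X) (t s : ℝ) :
    X →L[ℝ] X :=
  if s < t then (U t s).comp (P s)
  else if t < s then -((V t s).comp (1 - P s))
  else 0

/-- Membership in the class `H^μ_{γ,p}(P)`. -/
def MemHClass (μ : ℝ → ℝ) (P : ℝ → X →L[ℝ] X) (γ p : ℝ) (H : ℝ → X →L[ℝ] X) : Prop :=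
  (∀ x : X, ContinuousOn (fun t => H t x) (Set.Ici 0)) ∧
  (∀ t, 0 ≤ t → ∀ x : X,
    ‖H t x‖ ≤ (deriv μ t / μ t) ^ (1 / p) * μ t ^ γ * ‖P t x‖ +
      (deriv μ t / μ t) ^ (1 / p) * μ t ^ (-γ) * ‖(1 - P t) x‖)

private lemma aux_rpow_le {p L B : ℝ} (hp : 0 < p) (hL : 0 ≤ L) (hB : 0 ≤ B)
    (h : L ^ p ≤ B ^ p) : L ≤ B := by
  by_contra hlt
  push_neg at hlt
  exact absurd h (not_le.mpr (Real.rpow_lt_rpow hB hlt hp))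

private lemma aux_core {p L K E F D R : ℝ} (hp : 0 < p) (hL : 0 ≤ L) (hK : 0 < K)
    (hD : 0 ≤ D) (hR : 0 ≤ R)
    (h : Real.exp (p * E) * (L ^ p / K ^ p) ≤ D * Real.exp (p * F) * R ^ p) :
    L ≤ K * D ^ (1/p) * Real.exp (F - E) * R := by
  apply aux_rpow_le hp hL (by positivity)
  have hKp : (0:ℝ) < K ^ p := Real.rpow_pos_of_pos hK p
  have hE : (0:ℝ) < Real.exp (p * E) := Real.exp_pos _
  have h1 : L ^ p ≤ K ^ p * D * Real.exp (p * F) * R ^ p / Real.exp (p * E) := by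
    rw [le_div_iff₀ hE]
    calc L ^ p * Real.exp (p * E) = (Real.exp (p * E) * (L ^ p / K ^ p)) * K ^ p := by
          field_simp
      _ ≤ (D * Real.exp (p * F) * R ^ p) * K ^ p := mul_le_mul_of_nonneg_right h hKp.le
      _ = K ^ p * D * Real.exp (p * F) * R ^ p := by ring
  refine h1.trans_eq ?_
  have expand : (K * D ^ (1/p) * Real.exp (F - E) * R) ^ p
      = K ^ p * (D ^ (1/p)) ^ p * Real.exp ((F - E) * p) * R ^ p := by
    rw [Real.mul_rpow (by positivity) hR, Real.mul_rpow (by positivity) (Real.exp_pos _).le,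
      Real.mul_rpow hK.le (by positivity), ← Real.exp_mul]
  rw [expand, ← Real.rpow_mul hD, one_div_mul_cancel hp.ne', Real.rpow_one,
    show (F - E) * p = p * F - p * E by ring, Real.exp_sub]
  field_simp

private lemma aux_extract {f : ℝ → ENNReal} {u c R : ℝ} (hu : 0 ≤ u) (hR : 0 ≤ R)
    (hc : ∀ τ ∈ Set.Ioo u (u + 1), ENNReal.ofReal c ≤ f τ)
    (h : ∫⁻ τ in Set.Ioi (0:ℝ), f τ ≤ ENNReal.ofReal R) : c ≤ R := by
  have h1 : ENNReal.ofReal c * volume (Set.Ioo u (u + 1)) ≤ ∫⁻ τ in Set.Ioo u (u + 1), f τ := by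
    rw [← setLIntegral_const]
    exact setLIntegral_mono' measurableSet_Ioo hc
  rw [Real.volume_Ioo, show u + 1 - u = 1 by ring, ENNReal.ofReal_one, mul_one] at h1
  have h2 : (∫⁻ τ in Set.Ioo u (u + 1), f τ) ≤ ∫⁻ τ in Set.Ioi (0:ℝ), f τ :=
    lintegral_mono_set (fun τ hτ => lt_of_le_of_lt hu hτ.1)
  exact (ENNReal.ofReal_le_ofReal_iff hR).mp ((h1.trans h2).trans h)

set_option maxHeartbeats 2000000 in
/-- Corollary 3.3 (the exponential case `μ(t) = e^t`, Theorem 1 of Lupa–Megan): if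
`‖G(t,s)‖ ≤ M e^{αs} e^{ω|t-s|}` for `t ≠ s` and
`∫₀^∞ e^{pγ|τ-t|} ‖G(τ,t)x‖^p dτ ≤ D e^{pεt} ‖x‖^p`, then `U` has a nonuniform
exponential dichotomy with projection valued function `P`. -/
theorem integral_estimate_implies_exponential_dichotomy
    {X : Type*} [NormedAddCommGroup X] [NormedSpace ℝ X] [CompleteSpace X]
    (U V : ℝ → ℝ → X →L[ℝ] X) (P : ℝ → X →L[ℝ] X)
    (hU : IsEvolutionOperator U) (hP : IsProjectionValued P)
    (hC : CompatibleProjection U V P)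
    (M ω α : ℝ) (hω : 0 < ω) (hα : 0 ≤ α) (hM : 1 ≤ M)
    (hG : ∀ t s, 0 ≤ t → 0 ≤ s → t ≠ s →
      ‖greenFunction U V P t s‖ ≤ M * Real.exp (α * s) * Real.exp (ω * |t - s|))
    (p γ ε D : ℝ) (hp : 1 ≤ p) (hγ : α < γ) (hε : 0 ≤ ε) (hD : 0 < D)
    (hint : ∀ t, 0 ≤ t → ∀ x : X,
      ∫⁻ τ in Set.Ioi (0 : ℝ), ENNReal.ofReal
          (Real.exp (p * γ * |τ - t|) * ‖greenFunction U V P τ t x‖ ^ p)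
        ≤ ENNReal.ofReal (D * Real.exp (p * ε * t) * ‖x‖ ^ p)) :
    ∃ a b ε' N₁ N₂ : ℝ, 0 < a ∧ 0 < b ∧ 0 ≤ ε' ∧ 1 ≤ N₁ ∧ 1 ≤ N₂ ∧
      ∀ s t, 0 ≤ s → s ≤ t →
        ‖(U t s).comp (P s)‖ ≤ N₁ * Real.exp (-(a * (t - s))) * Real.exp (ε' * s) ∧
        ‖(V s t).comp (1 - P t)‖ ≤ N₂ * Real.exp (-(b * (t - s))) * Real.exp (ε' * t) := by
  obtain ⟨hU1, hU2, hU3⟩ := hU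
  obtain ⟨hP1, hP2⟩ := hP
  obtain ⟨hC1, hC2, hC3, hC4⟩ := hC
  have hM0 : (0:ℝ) < M := lt_of_lt_of_le one_pos hM
  have hp0 : (0:ℝ) < p := lt_of_lt_of_le one_pos hp
  have hγ0 : (0:ℝ) < γ := lt_of_le_of_lt hα hγ
  have ha : (0:ℝ) < γ - α := sub_pos.mpr hγ
  -- Green function branch descriptions
  have hGgt : ∀ t s : ℝ, s < t → ∀ x : X, greenFunction U V P t s x = U t s (P s x) := by
    intro t s h x
    simp [greenFunction, h, ContinuousLinearMap.comp_apply]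
  have hGlt : ∀ t s : ℝ, t < s → ∀ x : X,
      greenFunction U V P t s x = -(V t s ((1 - P s) x)) := by
    intro t s h x
    simp [greenFunction, h, h.asymm, ContinuousLinearMap.comp_apply]
  -- bound on ‖P s x‖ via a right limit
  have hPnorm : ∀ s : ℝ, 0 ≤ s → ∀ x : X,
      ‖P s x‖ ≤ M * Real.exp ω * Real.exp (α * s) * ‖x‖ := by
    intro s hs x
    have hco : ContinuousWithinAt (fun q : ℝ × ℝ => U q.1 q.2 (P s x))
        {q : ℝ × ℝ | 0 ≤ q.2 ∧ q.2 ≤ q.1} (s, s) := hU3 (P s x) (s, s) ⟨hs, le_refl s⟩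
    have hg : Filter.Tendsto (fun t : ℝ => ((t, s) : ℝ × ℝ)) (nhdsWithin s (Set.Ioi s))
        (nhdsWithin (s, s) {q : ℝ × ℝ | 0 ≤ q.2 ∧ q.2 ≤ q.1}) := by
      rw [tendsto_nhdsWithin_iff]
      constructor
      · exact ((continuous_id.prodMk continuous_const).tendsto s).mono_left nhdsWithin_le_nhds
      · filter_upwards [self_mem_nhdsWithin] with t ht
        exact ⟨hs, le_of_lt ht⟩
    have h2 : Filter.Tendsto (fun t : ℝ => U t s (P s x)) (nhdsWithin s (Set.Ioi s))
        (nhds (P s x)) := by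
      have h2' := hco.tendsto.comp hg
      simpa [hU1 s hs, Function.comp_def] using h2'
    have htd : Filter.Tendsto (fun t : ℝ => ‖U t s (P s x)‖) (nhdsWithin s (Set.Ioi s))
        (nhds ‖P s x‖) := h2.norm
    refine le_of_tendsto htd ?_
    filter_upwards [Ioo_mem_nhdsGT_of_mem (Set.mem_Ico.mpr ⟨le_refl s, lt_add_one s⟩)] with t ht
    have hst : s < t := ht.1
    have hb : ‖greenFunction U V P t s‖ ≤ M * Real.exp (α * s) * Real.exp (ω * |t - s|) :=
      hG t s (by linarith) hs hst.ne'
    calc ‖U t s (P s x)‖ = ‖greenFunction U V P t s x‖ := by rw [hGgt t s hst]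
      _ ≤ ‖greenFunction U V P t s‖ * ‖x‖ := ContinuousLinearMap.le_opNorm _ _
      _ ≤ (M * Real.exp (α * s) * Real.exp (ω * |t - s|)) * ‖x‖ :=
          mul_le_mul_of_nonneg_right hb (norm_nonneg x)
      _ = (M * Real.exp (α * s) * ‖x‖) * Real.exp (ω * |t - s|) := by ring
      _ ≤ (M * Real.exp (α * s) * ‖x‖) * Real.exp ω := by
          apply mul_le_mul_of_nonneg_left ?_ (by positivity)
          apply Real.exp_le_exp.mpr
          rw [abs_of_pos (by linarith : (0:ℝ) < t - s)]
          nlinarith [ht.2]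
      _ = M * Real.exp ω * Real.exp (α * s) * ‖x‖ := by ring
  -- chain inequality for the stable part
  have hchainU : ∀ s τ t : ℝ, 0 ≤ s → s < τ → τ < t → ∀ x : X,
      ‖U t s (P s x)‖ ≤ ‖greenFunction U V P t τ‖ * ‖greenFunction U V P τ s x‖ := by
    intro s τ t hs hsτ hτt x
    have h1 : U t s (P s x) = greenFunction U V P t τ (greenFunction U V P τ s x) := by
      rw [hGgt t τ hτt, hGgt τ s hsτ]
      have e1 : P τ (U τ s (P s x)) = U τ s (P s (P s x)) := by
        have := ContinuousLinearMap.ext_iff.1 (hC1 s τ hs hsτ.le) (P s x)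
        simpa using this
      have e2 : P s (P s x) = P s x := by
        have := ContinuousLinearMap.ext_iff.1 (hP1 s hs) x
        simpa using this
      have e3 : U t τ (U τ s (P s x)) = U t s (P s x) := by
        have := ContinuousLinearMap.ext_iff.1 (hU2 s τ t hs hsτ.le hτt.le) (P s x)
        simpa using this
      rw [e1, e2, e3]
    rw [h1]
    exact ContinuousLinearMap.le_opNorm _ _
  -- chain inequality for the unstable part
  have hchainV : ∀ s τ t : ℝ, 0 ≤ s → s < τ → τ < t → ∀ x : X,
      ‖V s t ((1 - P t) x)‖ ≤ ‖greenFunction U V P s τ‖ * ‖greenFunction U V P τ t x‖ := by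
    intro s τ t hs hsτ hτt x
    have hτ0 : 0 ≤ τ := le_trans hs hsτ.le
    have hst : s ≤ t := (hsτ.trans hτt).le
    have hQy : (1 - P τ) (V τ t ((1 - P t) x)) = V τ t ((1 - P t) x) := hC2 τ t hτ0 hτt.le x
    have hkey : V s t ((1 - P t) x) = V s τ ((1 - P τ) (V τ t ((1 - P t) x))) := by
      have hz₁ : (1 - P s) (V s t ((1 - P t) x)) = V s t ((1 - P t) x) := hC2 s t hs hst x
      have hz₂ : (1 - P s) (V s τ ((1 - P τ) (V τ t ((1 - P t) x))))
          = V s τ ((1 - P τ) (V τ t ((1 - P t) x))) := hC2 s τ hs hsτ.le _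
      have hU₁ : U t s (V s t ((1 - P t) x)) = (1 - P t) x := hC3 s t hs hst x
      have hU₂ : U t s (V s τ ((1 - P τ) (V τ t ((1 - P t) x)))) = (1 - P t) x := by
        have c1 : U t τ (U τ s (V s τ ((1 - P τ) (V τ t ((1 - P t) x)))))
            = U t s (V s τ ((1 - P τ) (V τ t ((1 - P t) x)))) := by
          have := ContinuousLinearMap.ext_iff.1 (hU2 s τ t hs hsτ.le hτt.le)
            (V s τ ((1 - P τ) (V τ t ((1 - P t) x))))
          simpa using this
        have c2 : U τ s (V s τ ((1 - P τ) (V τ t ((1 - P t) x))))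
            = (1 - P τ) (V τ t ((1 - P t) x)) := hC3 s τ hs hsτ.le _
        have c4 : U t τ (V τ t ((1 - P t) x)) = (1 - P t) x := hC3 τ t hτ0 hτt.le x
        rw [← c1, c2, hQy, c4]
      have r₁ : V s t (U t s (V s t ((1 - P t) x))) = V s t ((1 - P t) x) := by
        have := hC4 s t hs hst (V s t ((1 - P t) x))
        rwa [hz₁] at this
      have r₂ : V s t (U t s (V s τ ((1 - P τ) (V τ t ((1 - P t) x)))))
          = V s τ ((1 - P τ) (V τ t ((1 - P t) x))) := by
        have := hC4 s t hs hst (V s τ ((1 - P τ) (V τ t ((1 - P t) x))))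
        rwa [hz₂] at this
      calc V s t ((1 - P t) x) = V s t (U t s (V s t ((1 - P t) x))) := r₁.symm
        _ = V s t (U t s (V s τ ((1 - P τ) (V τ t ((1 - P t) x))))) := by rw [hU₁, hU₂]
        _ = V s τ ((1 - P τ) (V τ t ((1 - P t) x))) := r₂
    have g2 : ‖greenFunction U V P τ t x‖ = ‖V τ t ((1 - P t) x)‖ := by
      rw [hGlt τ t hτt x, norm_neg]
    calc ‖V s t ((1 - P t) x)‖ = ‖V s τ ((1 - P τ) (V τ t ((1 - P t) x)))‖ := by rw [hkey]
      _ = ‖greenFunction U V P s τ (V τ t ((1 - P t) x))‖ := by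
          rw [hGlt s τ hsτ (V τ t ((1 - P t) x)), norm_neg]
      _ ≤ ‖greenFunction U V P s τ‖ * ‖V τ t ((1 - P t) x)‖ :=
          ContinuousLinearMap.le_opNorm _ _
      _ = ‖greenFunction U V P s τ‖ * ‖greenFunction U V P τ t x‖ := by rw [g2]
  refine ⟨γ - α, γ - α, α + ε,
    M * Real.exp ω * Real.exp γ * D ^ (1/p) + M * Real.exp ω * Real.exp (γ - α) + 1,
    M * Real.exp α * Real.exp ω * Real.exp γ * D ^ (1/p)
      + (1 + M * Real.exp ω) * Real.exp (γ - α) + 1,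
    ha, ha, by positivity, ?_, ?_, ?_⟩
  · have u1 : (0:ℝ) ≤ M * Real.exp ω * Real.exp γ * D ^ (1/p) := by positivity
    have u2 : (0:ℝ) ≤ M * Real.exp ω * Real.exp (γ - α) := by positivity
    linarith
  · have u1 : (0:ℝ) ≤ M * Real.exp α * Real.exp ω * Real.exp γ * D ^ (1/p) := by positivity
    have u2 : (0:ℝ) ≤ (1 + M * Real.exp ω) * Real.exp (γ - α) := by positivity
    linarith
  intro s t hs hst
  have ht0 : (0:ℝ) ≤ t := le_trans hs hst
  constructor
  · -- stable part
    apply ContinuousLinearMap.opNorm_le_bound _ (by positivity)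
    intro x
    rw [ContinuousLinearMap.comp_apply]
    rcases le_or_gt (s + 1) t with h1 | h1
    · -- t - s ≥ 1
      have hu0 : (0:ℝ) ≤ t - 1 := by linarith
      have hKpos : (0:ℝ) < M * Real.exp ω * Real.exp (α * t) := by positivity
      have key : Real.exp (p * (γ * (t - 1 - s))) *
          (‖U t s (P s x)‖ ^ p / (M * Real.exp ω * Real.exp (α * t)) ^ p)
          ≤ D * Real.exp (p * (ε * s)) * ‖x‖ ^ p := by
        refine aux_extract (f := fun τ => ENNReal.ofReal
            (Real.exp (p * γ * |τ - s|) * ‖greenFunction U V P τ s x‖ ^ p))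
          hu0 (by positivity) ?_ ?_
        · intro τ hτ
          obtain ⟨hτ1, hτ2⟩ := hτ
          have hτ2' : τ < t := by linarith
          have hsτ : s < τ := by linarith
          have hτ0 : (0:ℝ) ≤ τ := le_trans hs hsτ.le
          apply ENNReal.ofReal_le_ofReal
          have hGop : ‖greenFunction U V P t τ‖ ≤ M * Real.exp ω * Real.exp (α * t) := by
            calc ‖greenFunction U V P t τ‖
                ≤ M * Real.exp (α * τ) * Real.exp (ω * |t - τ|) := hG t τ ht0 hτ0 hτ2'.ne'
              _ = (M * Real.exp (α * τ)) * Real.exp (ω * |t - τ|) := by ring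
              _ ≤ (M * Real.exp (α * t)) * Real.exp ω := by
                  apply mul_le_mul
                  · exact mul_le_mul_of_nonneg_left
                      (Real.exp_le_exp.mpr (mul_le_mul_of_nonneg_left hτ2'.le hα)) hM0.le
                  · apply Real.exp_le_exp.mpr
                    rw [abs_of_pos (by linarith : (0:ℝ) < t - τ)]
                    nlinarith
                  · exact (Real.exp_pos _).le
                  · positivity
              _ = M * Real.exp ω * Real.exp (α * t) := by ring
          have hL : ‖U t s (P s x)‖
              ≤ (M * Real.exp ω * Real.exp (α * t)) * ‖greenFunction U V P τ s x‖ :=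
            (hchainU s τ t hs hsτ hτ2' x).trans
              (mul_le_mul_of_nonneg_right hGop (norm_nonneg _))
          have hdiv : ‖U t s (P s x)‖ / (M * Real.exp ω * Real.exp (α * t))
              ≤ ‖greenFunction U V P τ s x‖ := by
            rw [div_le_iff₀ hKpos]
            linarith [hL]
          have hpow : ‖U t s (P s x)‖ ^ p / (M * Real.exp ω * Real.exp (α * t)) ^ p
              ≤ ‖greenFunction U V P τ s x‖ ^ p := by
            rw [← Real.div_rpow (norm_nonneg _) hKpos.le]
            exact Real.rpow_le_rpow (by positivity) hdiv hp0.le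
          have hexp : Real.exp (p * (γ * (t - 1 - s))) ≤ Real.exp (p * γ * |τ - s|) := by
            apply Real.exp_le_exp.mpr
            rw [abs_of_pos (by linarith : (0:ℝ) < τ - s)]
            nlinarith [mul_nonneg (mul_nonneg hp0.le hγ0.le)
              (show (0:ℝ) ≤ τ - (t - 1) by linarith)]
          exact mul_le_mul hexp hpow (by positivity) (Real.exp_pos _).le
        · have hintS := hint s hs x
          rw [show p * (ε * s) = p * ε * s by ring]
          exact hintS
      have hcore := aux_core hp0 (norm_nonneg _) hKpos hD.le (norm_nonneg x) key
      calc ‖U t s (P s x)‖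
          ≤ M * Real.exp ω * Real.exp (α * t) * D ^ (1/p) *
            Real.exp (ε * s - γ * (t - 1 - s)) * ‖x‖ := hcore
        _ = (M * Real.exp ω * D ^ (1/p) * ‖x‖) *
            (Real.exp (α * t) * Real.exp (ε * s - γ * (t - 1 - s))) := by ring
        _ ≤ (M * Real.exp ω * D ^ (1/p) * ‖x‖) *
            (Real.exp γ * (Real.exp (-((γ - α) * (t - s))) * Real.exp ((α + ε) * s))) := by
            apply mul_le_mul_of_nonneg_left ?_ (by positivity)
            rw [← Real.exp_add, ← Real.exp_add, ← Real.exp_add]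
            apply Real.exp_le_exp.mpr
            nlinarith
        _ = (M * Real.exp ω * Real.exp γ * D ^ (1/p)) * Real.exp (-((γ - α) * (t - s))) *
            Real.exp ((α + ε) * s) * ‖x‖ := by ring
        _ ≤ (M * Real.exp ω * Real.exp γ * D ^ (1/p) + M * Real.exp ω * Real.exp (γ - α) + 1) *
            Real.exp (-((γ - α) * (t - s))) * Real.exp ((α + ε) * s) * ‖x‖ := by
            have u2 : (0:ℝ) ≤ M * Real.exp ω * Real.exp (γ - α) := by positivity
            gcongr
            linarith
    · -- t - s < 1
      have hbase : ‖U t s (P s x)‖ ≤ M * Real.exp ω * Real.exp (α * s) * ‖x‖ := by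
        rcases eq_or_lt_of_le hst with heq | hlt
        · rw [← heq, hU1 s hs, ContinuousLinearMap.one_apply]
          exact hPnorm s hs x
        · calc ‖U t s (P s x)‖ = ‖greenFunction U V P t s x‖ := by rw [hGgt t s hlt]
            _ ≤ ‖greenFunction U V P t s‖ * ‖x‖ := ContinuousLinearMap.le_opNorm _ _
            _ ≤ (M * Real.exp (α * s) * Real.exp (ω * |t - s|)) * ‖x‖ :=
                mul_le_mul_of_nonneg_right (hG t s ht0 hs hlt.ne') (norm_nonneg x)
            _ = (M * Real.exp (α * s) * ‖x‖) * Real.exp (ω * |t - s|) := by ring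
            _ ≤ (M * Real.exp (α * s) * ‖x‖) * Real.exp ω := by
                apply mul_le_mul_of_nonneg_left ?_ (by positivity)
                apply Real.exp_le_exp.mpr
                rw [abs_of_pos (by linarith : (0:ℝ) < t - s)]
                nlinarith
            _ = M * Real.exp ω * Real.exp (α * s) * ‖x‖ := by ring
      calc ‖U t s (P s x)‖ ≤ M * Real.exp ω * Real.exp (α * s) * ‖x‖ := hbase
        _ = (M * Real.exp ω * ‖x‖) * Real.exp (α * s) := by ring
        _ ≤ (M * Real.exp ω * ‖x‖) *
            (Real.exp (γ - α) * (Real.exp (-((γ - α) * (t - s))) * Real.exp ((α + ε) * s))) := by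
            apply mul_le_mul_of_nonneg_left ?_ (by positivity)
            rw [← Real.exp_add, ← Real.exp_add]
            apply Real.exp_le_exp.mpr
            nlinarith [mul_nonneg ha.le (show (0:ℝ) ≤ 1 - (t - s) by linarith),
              mul_nonneg hε hs]
        _ = (M * Real.exp ω * Real.exp (γ - α)) * Real.exp (-((γ - α) * (t - s))) *
            Real.exp ((α + ε) * s) * ‖x‖ := by ring
        _ ≤ (M * Real.exp ω * Real.exp γ * D ^ (1/p) + M * Real.exp ω * Real.exp (γ - α) + 1) *
            Real.exp (-((γ - α) * (t - s))) * Real.exp ((α + ε) * s) * ‖x‖ := by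
            have u1 : (0:ℝ) ≤ M * Real.exp ω * Real.exp γ * D ^ (1/p) := by positivity
            gcongr
            linarith
  · -- unstable part
    apply ContinuousLinearMap.opNorm_le_bound _ (by positivity)
    intro x
    rw [ContinuousLinearMap.comp_apply]
    rcases le_or_gt (s + 1) t with h1 | h1
    · -- t - s ≥ 1
      have hu0 : (0:ℝ) ≤ t - 1 := by linarith
      have hKpos : (0:ℝ) < M * Real.exp α * Real.exp ω * Real.exp (α * s) := by positivity
      have key : Real.exp (p * (γ * (t - 1 - s))) *
          (‖V s t ((1 - P t) x)‖ ^ p / (M * Real.exp α * Real.exp ω * Real.exp (α * s)) ^ p)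
          ≤ D * Real.exp (p * (ε * t)) * ‖x‖ ^ p := by
        refine aux_extract (f := fun τ => ENNReal.ofReal
            (Real.exp (p * γ * |τ - t|) * ‖greenFunction U V P τ t x‖ ^ p))
          (u := s) hs (by positivity) ?_ ?_
        · intro τ hτ
          obtain ⟨hτ1, hτ2⟩ := hτ
          have hτt : τ < t := by linarith
          have hτ0 : (0:ℝ) ≤ τ := le_trans hs hτ1.le
          apply ENNReal.ofReal_le_ofReal
          have hGop : ‖greenFunction U V P s τ‖
              ≤ M * Real.exp α * Real.exp ω * Real.exp (α * s) := by
            calc ‖greenFunction U V P s τ‖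
                ≤ M * Real.exp (α * τ) * Real.exp (ω * |s - τ|) := hG s τ hs hτ0 hτ1.ne
              _ = (M * Real.exp (α * τ)) * Real.exp (ω * |s - τ|) := by ring
              _ ≤ (M * (Real.exp α * Real.exp (α * s))) * Real.exp ω := by
                  apply mul_le_mul
                  · apply mul_le_mul_of_nonneg_left ?_ hM0.le
                    rw [← Real.exp_add]
                    apply Real.exp_le_exp.mpr
                    nlinarith [mul_le_mul_of_nonneg_left hτ2.le hα]
                  · apply Real.exp_le_exp.mpr
                    rw [abs_sub_comm, abs_of_pos (by linarith : (0:ℝ) < τ - s)]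
                    nlinarith
                  · exact (Real.exp_pos _).le
                  · positivity
              _ = M * Real.exp α * Real.exp ω * Real.exp (α * s) := by ring
          have hL : ‖V s t ((1 - P t) x)‖
              ≤ (M * Real.exp α * Real.exp ω * Real.exp (α * s)) * ‖greenFunction U V P τ t x‖ :=
            (hchainV s τ t hs hτ1 hτt x).trans
              (mul_le_mul_of_nonneg_right hGop (norm_nonneg _))
          have hdiv : ‖V s t ((1 - P t) x)‖ / (M * Real.exp α * Real.exp ω * Real.exp (α * s))
              ≤ ‖greenFunction U V P τ t x‖ := by
            rw [div_le_iff₀ hKpos]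
            linarith [hL]
          have hpow : ‖V s t ((1 - P t) x)‖ ^ p
              / (M * Real.exp α * Real.exp ω * Real.exp (α * s)) ^ p
              ≤ ‖greenFunction U V P τ t x‖ ^ p := by
            rw [← Real.div_rpow (norm_nonneg _) hKpos.le]
            exact Real.rpow_le_rpow (by positivity) hdiv hp0.le
          have hexp : Real.exp (p * (γ * (t - 1 - s))) ≤ Real.exp (p * γ * |τ - t|) := by
            apply Real.exp_le_exp.mpr
            rw [abs_sub_comm, abs_of_pos (by linarith : (0:ℝ) < t - τ)]
            nlinarith [mul_nonneg (mul_nonneg hp0.le hγ0.le)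
              (show (0:ℝ) ≤ (s + 1) - τ by linarith)]
          exact mul_le_mul hexp hpow (by positivity) (Real.exp_pos _).le
        · have hintT := hint t ht0 x
          rw [show p * (ε * t) = p * ε * t by ring]
          exact hintT
      have hcore := aux_core hp0 (norm_nonneg _) hKpos hD.le (norm_nonneg x) key
      calc ‖V s t ((1 - P t) x)‖
          ≤ M * Real.exp α * Real.exp ω * Real.exp (α * s) * D ^ (1/p) *
            Real.exp (ε * t - γ * (t - 1 - s)) * ‖x‖ := hcore
        _ = (M * Real.exp α * Real.exp ω * D ^ (1/p) * ‖x‖) *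
            (Real.exp (α * s) * Real.exp (ε * t - γ * (t - 1 - s))) := by ring
        _ ≤ (M * Real.exp α * Real.exp ω * D ^ (1/p) * ‖x‖) *
            (Real.exp γ * (Real.exp (-((γ - α) * (t - s))) * Real.exp ((α + ε) * t))) := by
            apply mul_le_mul_of_nonneg_left ?_ (by positivity)
            rw [← Real.exp_add, ← Real.exp_add, ← Real.exp_add]
            apply Real.exp_le_exp.mpr
            nlinarith [mul_nonneg hα (sub_nonneg.mpr hst)]
        _ = (M * Real.exp α * Real.exp ω * Real.exp γ * D ^ (1/p)) *
            Real.exp (-((γ - α) * (t - s))) * Real.exp ((α + ε) * t) * ‖x‖ := by ring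
        _ ≤ (M * Real.exp α * Real.exp ω * Real.exp γ * D ^ (1/p)
              + (1 + M * Real.exp ω) * Real.exp (γ - α) + 1) *
            Real.exp (-((γ - α) * (t - s))) * Real.exp ((α + ε) * t) * ‖x‖ := by
            have u2 : (0:ℝ) ≤ (1 + M * Real.exp ω) * Real.exp (γ - α) := by positivity
            gcongr
            linarith
    · -- t - s < 1
      have hbase : ‖V s t ((1 - P t) x)‖ ≤ (1 + M * Real.exp ω) * Real.exp (α * t) * ‖x‖ := by
        rcases eq_or_lt_of_le hst with heq | hlt
        · have h4 := hC4 s s hs le_rfl x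
          rw [hU1 s hs, ContinuousLinearMap.one_apply] at h4
          rw [← heq, h4]
          have hx1 : ‖(1 - P s) x‖ ≤ ‖x‖ + ‖P s x‖ := by
            rw [ContinuousLinearMap.sub_apply, ContinuousLinearMap.one_apply]
            exact norm_sub_le _ _
          have hx2 := hPnorm s hs x
          have he1 : (1:ℝ) ≤ Real.exp (α * s) := Real.one_le_exp (by positivity)
          nlinarith [norm_nonneg x, Real.exp_pos ω, Real.exp_pos (α * s)]
        · have heq : V s t ((1 - P t) x) = -(greenFunction U V P s t x) := by
            rw [hGlt s t hlt x, neg_neg]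
          calc ‖V s t ((1 - P t) x)‖ = ‖greenFunction U V P s t x‖ := by rw [heq, norm_neg]
            _ ≤ ‖greenFunction U V P s t‖ * ‖x‖ := ContinuousLinearMap.le_opNorm _ _
            _ ≤ (M * Real.exp (α * t) * Real.exp (ω * |s - t|)) * ‖x‖ :=
                mul_le_mul_of_nonneg_right (hG s t hs ht0 hlt.ne) (norm_nonneg x)
            _ = (M * Real.exp (α * t) * ‖x‖) * Real.exp (ω * |s - t|) := by ring
            _ ≤ (M * Real.exp (α * t) * ‖x‖) * Real.exp ω := by
                apply mul_le_mul_of_nonneg_left ?_ (by positivity)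
                apply Real.exp_le_exp.mpr
                rw [abs_sub_comm, abs_of_pos (by linarith : (0:ℝ) < t - s)]
                nlinarith
            _ ≤ (1 + M * Real.exp ω) * Real.exp (α * t) * ‖x‖ := by
                nlinarith [norm_nonneg x, Real.exp_pos (α * t), Real.exp_pos ω]
      calc ‖V s t ((1 - P t) x)‖ ≤ (1 + M * Real.exp ω) * Real.exp (α * t) * ‖x‖ := hbase
        _ = ((1 + M * Real.exp ω) * ‖x‖) * Real.exp (α * t) := by ring
        _ ≤ ((1 + M * Real.exp ω) * ‖x‖) *
            (Real.exp (γ - α) * (Real.exp (-((γ - α) * (t - s))) * Real.exp ((α + ε) * t))) := by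
            apply mul_le_mul_of_nonneg_left ?_ (by positivity)
            rw [← Real.exp_add, ← Real.exp_add]
            apply Real.exp_le_exp.mpr
            nlinarith [mul_nonneg ha.le (show (0:ℝ) ≤ 1 - (t - s) by linarith),
              mul_nonneg hε ht0]
        _ = ((1 + M * Real.exp ω) * Real.exp (γ - α)) * Real.exp (-((γ - α) * (t - s))) *
            Real.exp ((α + ε) * t) * ‖x‖ := by ring
        _ ≤ (M * Real.exp α * Real.exp ω * Real.exp γ * D ^ (1/p)
              + (1 + M * Real.exp ω) * Real.exp (γ - α) + 1) *
            Real.exp (-((γ - α) * (t - s))) * Real.exp ((α + ε) * t) * ‖x‖ := by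
            have u1 : (0:ℝ) ≤ M * Real.exp α * Real.exp ω * Real.exp γ * D ^ (1/p) := by
              positivity
            gcongr
            linarith
end
end

section
/- Let U : Δ → B(X) be an evolution operator and P a projection valued function compatible with U such that ‖G(t,s)‖ ≤ M (1/(s+1)) ((t+1)/(s+1))^{ω·sign(t−s)} (s+1)^α for all t,s ≥ 0 with t ≠ s, for some ω > 0, α ≥ 0 and M ≥ 1. If there exist p ≥ 1, γ > α, ε ≥ 0 and D > 0 such that ∫₀^{+∞} (1/(τ+1)) ((τ+1)/(t+1))^{pγ·sign(τ−t)} ‖G(τ,t)x‖^p dτ ≤ D (t+1)^{pε} ‖x‖^p for every t ≥ 0 and x ∈ X, then U has a nonuniform polynomial dichotomy with projection valued function P, i.e. there exist ã,b̃ > 0, ε̃ ≥ 0 and N₁,N₂ ≥ 1 with ‖U(t,s)P(s)‖ ≤ N₁ ((t+1)/(s+1))^{−ã} (s+1)^{ε̃} and ‖U_Q(s,t)Q(t)‖ ≤ N₂ ((t+1)/(s+1))^{−b̃} (t+1)^{ε̃} for all t ≥ s ≥ 0. -/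
open Real MeasureTheory Filter

noncomputable section

variable {X : Type*} [NormedAddCommGroup X] [NormedSpace ℝ X]

section AuxHelpers

lemma aux_rpow_anti {x y z : ℝ} (hx : 0 < x) (hxy : x ≤ y) (hz : z ≤ 0) : y ^ z ≤ x ^ z := by
  have hy : 0 < y := lt_of_lt_of_le hx hxy
  rw [show z = -(-z) by ring, Real.rpow_neg hx.le, Real.rpow_neg hy.le]
  exact inv_anti₀ (Real.rpow_pos_of_pos hx _) (Real.rpow_le_rpow hx.le hxy (by linarith))

lemma aux_one_le_rpow {x y : ℝ} (hx : 1 ≤ x) (hy : 0 ≤ y) : 1 ≤ x ^ y := by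
  calc (1:ℝ) = x ^ (0:ℝ) := (Real.rpow_zero x).symm
  _ ≤ x ^ y := Real.rpow_le_rpow_of_exponent_le hx hy

lemma aux_rpow_inv_le_max {x p : ℝ} (hx : 0 ≤ x) (hp : 1 ≤ p) : x ^ (1/p) ≤ max 1 x := by
  have hp0 : (0:ℝ) < p := lt_of_lt_of_le one_pos hp
  rcases le_total x 1 with h | h
  · exact le_trans (Real.rpow_le_one hx h (by positivity)) (le_max_left _ _)
  · calc x ^ (1/p) ≤ x ^ (1:ℝ) :=
        Real.rpow_le_rpow_of_exponent_le h (by rw [div_le_one hp0]; exact hp)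
    _ = x := Real.rpow_one x
    _ ≤ max 1 x := le_max_right _ _

lemma aux_le_of_rpow_le {A B p : ℝ} (hA : 0 ≤ A) (hB : 0 ≤ B) (hp : 1 ≤ p)
    (h : A ^ p ≤ B ^ p) : A ≤ B :=
  (Real.rpow_le_rpow_iff hA hB (lt_of_lt_of_le one_pos hp)).mp h

lemma aux_setLIntegral_extract {f : ℝ → ℝ} {J : Set ℝ} (hJm : MeasurableSet J)
    (hJs : J ⊆ Set.Ioi (0:ℝ)) {c R L : ℝ} (hc : 0 ≤ c)
    (hvol : volume J = ENNReal.ofReal L)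
    (hpt : ∀ τ ∈ J, c ≤ f τ) (hR : 0 ≤ R)
    (hint : ∫⁻ τ in Set.Ioi (0:ℝ), ENNReal.ofReal (f τ) ≤ ENNReal.ofReal R) :
    c * L ≤ R := by
  have h0 : ENNReal.ofReal c * volume J
      = ∫⁻ τ in Set.Ioi (0:ℝ), J.indicator (fun _ => ENNReal.ofReal c) τ := by
    rw [lintegral_indicator hJm, setLIntegral_const, Measure.restrict_apply hJm,
      Set.inter_eq_self_of_subset_left hJs, mul_comm]
  have h1 : ∫⁻ τ in Set.Ioi (0:ℝ), J.indicator (fun _ => ENNReal.ofReal c) τ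
      ≤ ∫⁻ τ in Set.Ioi (0:ℝ), ENNReal.ofReal (f τ) := by
    apply lintegral_mono
    intro τ
    by_cases h : τ ∈ J
    · rw [Set.indicator_of_mem h]; exact ENNReal.ofReal_le_ofReal (hpt τ h)
    · rw [Set.indicator_of_notMem h]; exact zero_le
  have h2 : ENNReal.ofReal (c * L) ≤ ENNReal.ofReal R := by
    rw [ENNReal.ofReal_mul hc, ← hvol]
    exact le_trans h0.le (le_trans h1 hint)
  exact (ENNReal.ofReal_le_ofReal_iff hR).mp h2

/-- Solve `(1/2) * w^(pγ) * (A/B)^p ≤ D * m^(pε) * nx^p` for `A`. -/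
lemma aux_solve {A B w m nx p γ ε D : ℝ} (hA : 0 ≤ A) (hB : 0 < B) (hw : 0 < w)
    (hm : 0 < m) (hnx : 0 ≤ nx) (hp : 1 ≤ p) (hD : 0 < D)
    (h : 1/2 * w ^ (p*γ) * (A/B) ^ p ≤ D * m ^ (p*ε) * nx ^ p) :
    A ≤ B * (max 1 (2*D) * m ^ ε * nx * (w⁻¹) ^ γ) := by
  have hp0 : (0:ℝ) < p := lt_of_lt_of_le one_pos hp
  have hwp : (0:ℝ) < w ^ (p*γ) := Real.rpow_pos_of_pos hw _
  have h2 : (A/B) ^ p ≤ 2 * D * m ^ (p*ε) * nx ^ p * (w ^ (p*γ))⁻¹ := by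
    rw [← div_eq_mul_inv, le_div_iff₀ hwp]
    calc (A/B) ^ p * w ^ (p*γ) = 2 * (1/2 * w ^ (p*γ) * (A/B) ^ p) := by ring
    _ ≤ 2 * (D * m ^ (p*ε) * nx ^ p) := by linarith
    _ = 2 * D * m ^ (p*ε) * nx ^ p := by ring
  set E : ℝ := (2*D) ^ (1/p) * m ^ ε * nx * (w⁻¹) ^ γ with hE
  have hEnn : 0 ≤ E := by positivity
  have hEp : E ^ p = 2 * D * m ^ (p*ε) * nx ^ p * (w ^ (p*γ))⁻¹ := by
    rw [hE, Real.mul_rpow (by positivity) (by positivity),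
      Real.mul_rpow (by positivity) (by positivity),
      Real.mul_rpow (by positivity) (by positivity),
      ← Real.rpow_mul (by positivity : (0:ℝ) ≤ 2*D),
      ← Real.rpow_mul hm.le, ← Real.rpow_mul (inv_nonneg.mpr hw.le),
      one_div_mul_cancel (ne_of_gt hp0), Real.rpow_one,
      Real.inv_rpow hw.le, mul_comm ε p, mul_comm γ p]
  have h4 : A / B ≤ E := aux_le_of_rpow_le (by positivity) hEnn hp (by rw [hEp]; exact h2)
  have h5 : A ≤ E * B := (div_le_iff₀ hB).mp h4
  have h6 : E ≤ max 1 (2*D) * m ^ ε * nx * (w⁻¹) ^ γ := by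
    rw [hE]
    have := aux_rpow_inv_le_max (by positivity : (0:ℝ) ≤ 2*D) hp
    have h7 : (0:ℝ) ≤ m ^ ε * nx * (w⁻¹) ^ γ := by positivity
    nlinarith [Real.rpow_nonneg (inv_nonneg.mpr hw.le) γ, Real.rpow_nonneg hm.le ε]
  calc A ≤ E * B := h5
  _ ≤ (max 1 (2*D) * m ^ ε * nx * (w⁻¹) ^ γ) * B := by
      apply mul_le_mul_of_nonneg_right h6 hB.le
  _ = B * (max 1 (2*D) * m ^ ε * nx * (w⁻¹) ^ γ) := by ring

end AuxHelpers
section AuxStruct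
variable {X : Type*} [NormedAddCommGroup X] [NormedSpace ℝ X]

lemma aux_UP_norm {U V : ℝ → ℝ → X →L[ℝ] X} {P : ℝ → X →L[ℝ] X} {M ω α : ℝ}
    (hG : ∀ t s, 0 ≤ t → 0 ≤ s → t ≠ s →
      ‖greenFunction U V P t s‖ ≤
        M * (1 / (s + 1)) * ((t + 1) / (s + 1)) ^ (ω * Real.sign (t - s)) * (s + 1) ^ α)
    {s t : ℝ} (hs : 0 ≤ s) (hst : s < t) :
    ‖(U t s).comp (P s)‖ ≤ M * (s+1) ^ (α-1) * ((t+1)/(s+1)) ^ ω := by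
  have hs1 : (0:ℝ) < s + 1 := by linarith
  have h := hG t s (le_trans hs hst.le) hs (ne_of_gt hst)
  simp only [greenFunction, if_pos hst] at h
  have heq : M * (1/(s+1)) * ((t+1)/(s+1)) ^ (ω * Real.sign (t-s)) * (s+1) ^ α
      = M * (s+1) ^ (α-1) * ((t+1)/(s+1)) ^ ω := by
    rw [Real.sign_of_pos (by linarith : (0:ℝ) < t - s), mul_one,
      Real.rpow_sub hs1, Real.rpow_one]
    ring
  rw [heq] at h
  exact h

lemma aux_VQ_norm {U V : ℝ → ℝ → X →L[ℝ] X} {P : ℝ → X →L[ℝ] X} {M ω α : ℝ}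
    (hG : ∀ t s, 0 ≤ t → 0 ≤ s → t ≠ s →
      ‖greenFunction U V P t s‖ ≤
        M * (1 / (s + 1)) * ((t + 1) / (s + 1)) ^ (ω * Real.sign (t - s)) * (s + 1) ^ α)
    {s t : ℝ} (hs : 0 ≤ s) (hst : s < t) :
    ‖(V s t).comp (1 - P t)‖ ≤ M * (t+1) ^ (α-1) * ((t+1)/(s+1)) ^ ω := by
  have hs1 : (0:ℝ) < s + 1 := by linarith
  have ht1 : (0:ℝ) < t + 1 := by linarith
  have h := hG s t hs (le_trans hs hst.le) (ne_of_lt hst)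
  simp only [greenFunction, if_neg (not_lt.mpr hst.le), if_pos hst, norm_neg] at h
  have heq : M * (1/(t+1)) * ((s+1)/(t+1)) ^ (ω * Real.sign (s-t)) * (t+1) ^ α
      = M * (t+1) ^ (α-1) * ((t+1)/(s+1)) ^ ω := by
    rw [Real.sign_of_neg (by linarith : s - t < 0), mul_neg_one,
      Real.rpow_neg (div_nonneg hs1.le ht1.le),
      ← Real.inv_rpow (div_nonneg hs1.le ht1.le), inv_div, Real.rpow_sub ht1, Real.rpow_one]
    ring
  rw [heq] at h
  exact h

lemma aux_UP_factor {U V : ℝ → ℝ → X →L[ℝ] X} {P : ℝ → X →L[ℝ] X}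
    (hU : IsEvolutionOperator U) (hP : IsProjectionValued P) (hC : CompatibleProjection U V P)
    {s τ t : ℝ} (hs : 0 ≤ s) (h1 : s ≤ τ) (h2 : τ ≤ t) (x : X) :
    U t s (P s x) = U t τ (P τ (U τ s (P s x))) := by
  have e1 := ContinuousLinearMap.ext_iff.mp (hC.1 s τ hs h1) (P s x)
  have e2 := ContinuousLinearMap.ext_iff.mp (hP.1 s hs) x
  have e3 := ContinuousLinearMap.ext_iff.mp (hU.2.1 s τ t hs h1 h2) (P s x)
  simp only [ContinuousLinearMap.comp_apply] at e1 e2 e3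
  rw [e1, e2, e3]

lemma aux_VQ_factor {U V : ℝ → ℝ → X →L[ℝ] X} {P : ℝ → X →L[ℝ] X}
    (hU : IsEvolutionOperator U) (hC : CompatibleProjection U V P)
    {s τ t : ℝ} (hs : 0 ≤ s) (h1 : s ≤ τ) (h2 : τ ≤ t) (x : X) :
    V s t ((1 - P t) x) = V s τ ((1 - P τ) (V τ t ((1 - P t) x))) := by
  have hτ : 0 ≤ τ := le_trans hs h1
  set y := V τ t ((1 - P t) x) with hy
  have hQy : (1 - P τ) y = y := hC.2.1 τ t hτ h2 x
  set z := V s τ ((1 - P τ) y) with hz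
  have hQz : (1 - P s) z = z := hC.2.1 s τ hs h1 y
  have hUz : U τ s z = (1 - P τ) y := hC.2.2.1 s τ hs h1 y
  have hUy : U t τ y = (1 - P t) x := hC.2.2.1 τ t hτ h2 x
  have hUts : U t s z = (1 - P t) x := by
    have e3 := ContinuousLinearMap.ext_iff.mp (hU.2.1 s τ t hs h1 h2) z
    simp only [ContinuousLinearMap.comp_apply] at e3
    rw [← e3, hUz, hQy, hUy]
  have h4 := hC.2.2.2 s t hs (le_trans h1 h2) z
  rw [hQz, hUts] at h4
  exact h4

lemma aux_norm_le_of_approx {U : ℝ → ℝ → X →L[ℝ] X}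
    (hU1 : ∀ t, 0 ≤ t → U t t = 1)
    (hU3 : ∀ x : X, ContinuousOn (fun q : ℝ × ℝ => U q.1 q.2 x) {q : ℝ × ℝ | 0 ≤ q.2 ∧ q.2 ≤ q.1})
    {s C : ℝ} (hs : 0 ≤ s) (y : X)
    (hbd : ∀ t, s < t → t ≤ s + 1 → ‖U t s y‖ ≤ C) : ‖y‖ ≤ C := by
  set tn : ℕ → ℝ := fun n => s + 1 / (n + 1) with htn
  have htend : Tendsto tn atTop (nhds s) := by
    have h1 : Tendsto (fun n : ℕ => 1 / ((n : ℝ) + 1)) atTop (nhds 0) :=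
      tendsto_one_div_add_atTop_nhds_zero_nat
    have h2 := h1.const_add s
    simpa [htn, one_div] using h2
  have hmem : ∀ n : ℕ, ((tn n, s) : ℝ × ℝ) ∈ {q : ℝ × ℝ | 0 ≤ q.2 ∧ q.2 ≤ q.1} := by
    intro n
    refine ⟨hs, ?_⟩
    have : (0:ℝ) < 1 / (n + 1) := by positivity
    simp only [htn]; linarith
  have hcw := (hU3 y) (s, s) ⟨hs, le_refl s⟩
  have hseq : Tendsto (fun n : ℕ => ((tn n, s) : ℝ × ℝ)) atTop
      (nhdsWithin (s, s) {q : ℝ × ℝ | 0 ≤ q.2 ∧ q.2 ≤ q.1}) := by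
    rw [tendsto_nhdsWithin_iff]
    exact ⟨(htend.prodMk_nhds tendsto_const_nhds), Filter.Eventually.of_forall hmem⟩
  have hlim : Tendsto (fun n : ℕ => U (tn n) s y) atTop (nhds (U s s y)) :=
    hcw.tendsto.comp hseq
  have hlim' : Tendsto (fun n : ℕ => ‖U (tn n) s y‖) atTop (nhds ‖y‖) := by
    have := hlim.norm
    rwa [hU1 s hs] at this
  refine le_of_tendsto hlim' (Filter.Eventually.of_forall fun n => ?_)
  apply hbd
  · have : (0:ℝ) < 1 / (n + 1) := by positivity
    simp only [htn]; linarith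
  · have : (1:ℝ) / (n + 1) ≤ 1 := by
      rw [div_le_one (by positivity)]; linarith
    simp only [htn]; linarith

lemma aux_P_norm {U V : ℝ → ℝ → X →L[ℝ] X} {P : ℝ → X →L[ℝ] X}
    (hU : IsEvolutionOperator U) {M ω α : ℝ} (hω : 0 < ω) (hM : 1 ≤ M)
    (hG : ∀ t s, 0 ≤ t → 0 ≤ s → t ≠ s →
      ‖greenFunction U V P t s‖ ≤
        M * (1 / (s + 1)) * ((t + 1) / (s + 1)) ^ (ω * Real.sign (t - s)) * (s + 1) ^ α)
    {s : ℝ} (hs : 0 ≤ s) (x : X) :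
    ‖P s x‖ ≤ M * 2 ^ ω * (s+1) ^ (α-1) * ‖x‖ := by
  have hs1 : (0:ℝ) < s + 1 := by linarith
  apply aux_norm_le_of_approx hU.1 hU.2.2 hs (P s x)
  intro t h1 h2
  have hUP : ‖(U t s).comp (P s)‖ ≤ M * (s+1) ^ (α-1) * ((t+1)/(s+1)) ^ ω :=
    aux_UP_norm hG hs h1
  have hr2 : ((t+1)/(s+1) : ℝ) ≤ 2 := by
    rw [div_le_iff₀ hs1]; linarith
  have hrω : ((t+1)/(s+1) : ℝ) ^ ω ≤ 2 ^ ω :=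
    Real.rpow_le_rpow (div_nonneg (by linarith) hs1.le) hr2 hω.le
  calc ‖U t s (P s x)‖ = ‖((U t s).comp (P s)) x‖ := by
        simp [ContinuousLinearMap.comp_apply]
  _ ≤ ‖(U t s).comp (P s)‖ * ‖x‖ := ContinuousLinearMap.le_opNorm _ x
  _ ≤ (M * (s+1) ^ (α-1) * ((t+1)/(s+1)) ^ ω) * ‖x‖ := by
      apply mul_le_mul_of_nonneg_right hUP (norm_nonneg x)
  _ ≤ (M * (s+1) ^ (α-1) * 2 ^ ω) * ‖x‖ := by
      have hM0 : 0 ≤ M * (s+1) ^ (α-1) :=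
        mul_nonneg (by linarith) (Real.rpow_nonneg hs1.le _)
      nlinarith [norm_nonneg x, Real.rpow_nonneg (le_of_lt hs1) (α-1),
        mul_le_mul_of_nonneg_left hrω hM0]
  _ = M * 2 ^ ω * (s+1) ^ (α-1) * ‖x‖ := by ring

end AuxStruct
set_option maxHeartbeats 1000000

section AuxFar
variable {X : Type*} [NormedAddCommGroup X] [NormedSpace ℝ X]

lemma aux_stable_far {U V : ℝ → ℝ → X →L[ℝ] X} {P : ℝ → X →L[ℝ] X}
    (hU : IsEvolutionOperator U) (hP : IsProjectionValued P) (hC : CompatibleProjection U V P)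
    {M ω α p γ ε D : ℝ} (hω : 0 < ω) (hα : 0 ≤ α) (hM : 1 ≤ M)
    (hG : ∀ t s, 0 ≤ t → 0 ≤ s → t ≠ s →
      ‖greenFunction U V P t s‖ ≤
        M * (1 / (s + 1)) * ((t + 1) / (s + 1)) ^ (ω * Real.sign (t - s)) * (s + 1) ^ α)
    (hp : 1 ≤ p) (hγ0 : 0 < γ) (hε : 0 ≤ ε) (hD : 0 < D)
    (hint : ∀ t, 0 ≤ t → ∀ x : X,
      ∫⁻ τ in Set.Ioi (0 : ℝ), ENNReal.ofReal
          (1 / (τ + 1) * ((τ + 1) / (t + 1)) ^ (p * γ * Real.sign (τ - t)) *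
            ‖greenFunction U V P τ t x‖ ^ p)
        ≤ ENNReal.ofReal (D * (t + 1) ^ (p * ε) * ‖x‖ ^ p))
    {s t : ℝ} (hs : 0 ≤ s) (hfar : 2*s+1 ≤ t) (x : X) :
    ‖((U t s).comp (P s)) x‖ ≤
      (2^(α+1) * 2^ω * M * (t+1)^(α-1)) * (max 1 (2*D) * (s+1)^ε * ‖x‖ * ((2*(s+1))/(t+1))^γ) := by
  have hs1 : (0:ℝ) < s + 1 := by linarith
  have ht1 : (0:ℝ) < t + 1 := by linarith
  have hst : s < t := by linarith
  set A := ‖((U t s).comp (P s)) x‖ with hA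
  have hA0 : 0 ≤ A := norm_nonneg _
  set B := 2^(α+1) * 2^ω * M * (t+1)^(α-1) with hB
  have hBpos : 0 < B :=
    mul_pos (mul_pos (mul_pos (Real.rpow_pos_of_pos two_pos _) (Real.rpow_pos_of_pos two_pos _))
      (by linarith)) (Real.rpow_pos_of_pos ht1 _)
  set J := Set.Ioo ((t-1)/2) t with hJ
  have hJm : MeasurableSet J := measurableSet_Ioo
  have hmid : s ≤ (t-1)/2 := by linarith
  have hJs : J ⊆ Set.Ioi (0:ℝ) := by
    intro τ hτ
    have h1 := hτ.1
    exact Set.mem_Ioi.mpr (by linarith)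
  have hvol : volume J = ENNReal.ofReal ((t+1)/2) := by
    rw [hJ, Real.volume_Ioo]
    congr 1
    ring
  set c := 1/(t+1) * ((t+1)/(2*(s+1))) ^ (p*γ) * (A/B) ^ p with hc
  have hc0 : 0 ≤ c := by
    apply mul_nonneg (mul_nonneg (div_nonneg zero_le_one ht1.le)
      (Real.rpow_nonneg (div_nonneg ht1.le (by linarith)) _))
    exact Real.rpow_nonneg (div_nonneg hA0 hBpos.le) _
  have hpt : ∀ τ ∈ J, c ≤
      1 / (τ + 1) * ((τ + 1) / (s + 1)) ^ (p * γ * Real.sign (τ - s)) *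
        ‖greenFunction U V P τ s x‖ ^ p := by
    intro τ hτ
    obtain ⟨hτ1, hτ2⟩ := hτ
    have hsτ : s < τ := by linarith
    have hτ0 : (0:ℝ) ≤ τ := by linarith
    have hτ1' : (0:ℝ) < τ + 1 := by linarith
    have hsign : Real.sign (τ - s) = 1 := Real.sign_of_pos (by linarith)
    rw [hsign, mul_one]
    have hgf : greenFunction U V P τ s = (U τ s).comp (P s) := by
      simp only [greenFunction, if_pos hsτ]
    -- bound ‖(U t τ).comp (P τ)‖ ≤ B
    have hUPn : ‖(U t τ).comp (P τ)‖ ≤ M * (τ+1) ^ (α-1) * ((t+1)/(τ+1)) ^ ω :=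
      aux_UP_norm hG hτ0 hτ2
    have hfac1 : ((t+1)/(τ+1)) ^ ω ≤ 2 ^ ω := by
      apply Real.rpow_le_rpow (div_nonneg ht1.le hτ1'.le) _ hω.le
      rw [div_le_iff₀ hτ1']
      linarith
    have hfac2 : (τ+1) ^ (α-1) ≤ 2 ^ (α+1) * (t+1) ^ (α-1) := by
      rcases le_or_gt 1 α with hA1 | hA1
      · have h1 : (τ+1) ^ (α-1) ≤ (t+1) ^ (α-1) :=
          Real.rpow_le_rpow hτ1'.le (by linarith) (by linarith)
        have h2 : (1:ℝ) ≤ 2 ^ (α+1) := aux_one_le_rpow one_le_two (by linarith)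
        nlinarith [Real.rpow_nonneg ht1.le (α-1)]
      · have h1 : (τ+1) ^ (α-1) ≤ ((t+1)/2) ^ (α-1) :=
          aux_rpow_anti (by linarith : (0:ℝ) < (t+1)/2) (by linarith) (by linarith)
        have h2 : ((t+1)/2) ^ (α-1) = (t+1) ^ (α-1) * (2:ℝ) ^ (1-α) := by
          rw [Real.div_rpow ht1.le (by norm_num), div_eq_mul_inv,
            ← Real.rpow_neg (by norm_num : (0:ℝ) ≤ 2)]
          congr 1
          ring
        have h3 : (2:ℝ) ^ (1-α) ≤ 2 ^ (α+1) :=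
          Real.rpow_le_rpow_of_exponent_le one_le_two (by linarith)
        nlinarith [Real.rpow_nonneg ht1.le (α-1)]
    have hBn : ‖(U t τ).comp (P τ)‖ ≤ B := by
      have hstep : M * (τ+1) ^ (α-1) * ((t+1)/(τ+1)) ^ ω
          ≤ M * (2 ^ (α+1) * (t+1) ^ (α-1)) * 2 ^ ω := by
        apply mul_le_mul (mul_le_mul_of_nonneg_left hfac2 (by linarith)) hfac1
          (Real.rpow_nonneg (div_nonneg ht1.le hτ1'.le) _)
        have : (0:ℝ) ≤ 2 ^ (α+1) * (t+1) ^ (α-1) :=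
          mul_nonneg (Real.rpow_nonneg (by norm_num) _) (Real.rpow_nonneg ht1.le _)
        nlinarith
      have heqB : M * (2 ^ (α+1) * (t+1) ^ (α-1)) * 2 ^ ω = B := by
        rw [hB]; ring
      linarith [hUPn]
    -- A ≤ B * ‖G τ s x‖
    have hAle : A ≤ B * ‖((U τ s).comp (P s)) x‖ := by
      have hf := aux_UP_factor hU hP hC hs hsτ.le hτ2.le x
      calc A = ‖U t s (P s x)‖ := by rw [hA]; simp [ContinuousLinearMap.comp_apply]
      _ = ‖((U t τ).comp (P τ)) (U τ s (P s x))‖ := by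
          rw [hf]; simp [ContinuousLinearMap.comp_apply]
      _ ≤ ‖(U t τ).comp (P τ)‖ * ‖U τ s (P s x)‖ := ContinuousLinearMap.le_opNorm _ _
      _ ≤ B * ‖U τ s (P s x)‖ := mul_le_mul_of_nonneg_right hBn (norm_nonneg _)
      _ = B * ‖((U τ s).comp (P s)) x‖ := by simp [ContinuousLinearMap.comp_apply]
    have hGlow : A / B ≤ ‖greenFunction U V P τ s x‖ := by
      rw [hgf, div_le_iff₀ hBpos]
      linarith
    -- combine the three factors
    have h_i1 : 1/(t+1) ≤ 1/(τ+1) := by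
      apply one_div_le_one_div_of_le hτ1'
      linarith
    have h_i2 : ((t+1)/(2*(s+1))) ^ (p*γ) ≤ ((τ+1)/(s+1)) ^ (p*γ) := by
      apply Real.rpow_le_rpow (div_nonneg ht1.le (by linarith)) _
        (mul_nonneg (by linarith) hγ0.le)
      rw [div_le_div_iff₀ (by linarith) hs1]
      nlinarith
    have h_i3 : (A/B) ^ p ≤ ‖greenFunction U V P τ s x‖ ^ p :=
      Real.rpow_le_rpow (div_nonneg hA0 hBpos.le) hGlow (by linarith)
    rw [hc]
    apply mul_le_mul (mul_le_mul h_i1 h_i2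
        (Real.rpow_nonneg (div_nonneg ht1.le (by linarith)) _)
        (div_nonneg zero_le_one hτ1'.le))
      h_i3 (Real.rpow_nonneg (div_nonneg hA0 hBpos.le) _)
    exact mul_nonneg (div_nonneg zero_le_one hτ1'.le)
      (Real.rpow_nonneg (div_nonneg hτ1'.le hs1.le) _)
  have hR0 : 0 ≤ D * (s+1) ^ (p*ε) * ‖x‖ ^ p :=
    mul_nonneg (mul_nonneg hD.le (Real.rpow_nonneg hs1.le _)) (Real.rpow_nonneg (norm_nonneg x) _)
  have hextract : c * ((t+1)/2) ≤ D * (s+1) ^ (p*ε) * ‖x‖ ^ p :=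
    aux_setLIntegral_extract hJm hJs hc0 hvol hpt hR0 (hint s hs x)
  have hkey2 : 1/2 * ((t+1)/(2*(s+1))) ^ (p*γ) * (A/B) ^ p ≤ D * (s+1) ^ (p*ε) * ‖x‖ ^ p := by
    have e : 1/2 * ((t+1)/(2*(s+1))) ^ (p*γ) * (A/B) ^ p = c * ((t+1)/2) := by
      rw [hc]
      field_simp
    rw [e]
    exact hextract
  have := aux_solve hA0 hBpos (div_pos ht1 (by linarith)) hs1 (norm_nonneg x) hp hD hkey2
  rwa [inv_div] at this

end AuxFar
section AuxFar2
set_option maxHeartbeats 1000000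
variable {X : Type*} [NormedAddCommGroup X] [NormedSpace ℝ X]

lemma aux_unstable_far {U V : ℝ → ℝ → X →L[ℝ] X} {P : ℝ → X →L[ℝ] X}
    (hU : IsEvolutionOperator U) (hC : CompatibleProjection U V P)
    {M ω α p γ ε D : ℝ} (hω : 0 < ω) (hα : 0 ≤ α) (hM : 1 ≤ M)
    (hG : ∀ t s, 0 ≤ t → 0 ≤ s → t ≠ s →
      ‖greenFunction U V P t s‖ ≤
        M * (1 / (s + 1)) * ((t + 1) / (s + 1)) ^ (ω * Real.sign (t - s)) * (s + 1) ^ α)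
    (hp : 1 ≤ p) (hγ0 : 0 < γ) (hε : 0 ≤ ε) (hD : 0 < D)
    (hint : ∀ t, 0 ≤ t → ∀ x : X,
      ∫⁻ τ in Set.Ioi (0 : ℝ), ENNReal.ofReal
          (1 / (τ + 1) * ((τ + 1) / (t + 1)) ^ (p * γ * Real.sign (τ - t)) *
            ‖greenFunction U V P τ t x‖ ^ p)
        ≤ ENNReal.ofReal (D * (t + 1) ^ (p * ε) * ‖x‖ ^ p))
    {s t : ℝ} (hs : 0 ≤ s) (hfar : 2*s+1 ≤ t) (x : X) :
    ‖((V s t).comp (1 - P t)) x‖ ≤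
      (2^(α+1) * 2^ω * M * (s+1)^(α-1)) * (max 1 (2*D) * (t+1)^ε * ‖x‖ * ((2*(s+1))/(t+1))^γ) := by
  have hs1 : (0:ℝ) < s + 1 := by linarith
  have ht1 : (0:ℝ) < t + 1 := by linarith
  have hst : s < t := by linarith
  have ht0 : (0:ℝ) ≤ t := by linarith
  set A := ‖((V s t).comp (1 - P t)) x‖ with hA
  have hA0 : 0 ≤ A := norm_nonneg _
  set B := 2^(α+1) * 2^ω * M * (s+1)^(α-1) with hB
  have hBpos : 0 < B :=
    mul_pos (mul_pos (mul_pos (Real.rpow_pos_of_pos two_pos _) (Real.rpow_pos_of_pos two_pos _))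
      (by linarith)) (Real.rpow_pos_of_pos hs1 _)
  set J := Set.Ioo s (2*s+1) with hJ
  have hJm : MeasurableSet J := measurableSet_Ioo
  have hJs : J ⊆ Set.Ioi (0:ℝ) := by
    intro τ hτ
    have h1 := hτ.1
    exact Set.mem_Ioi.mpr (by linarith)
  have hvol : volume J = ENNReal.ofReal (s+1) := by
    rw [hJ, Real.volume_Ioo]
    congr 1
    ring
  set c := 1/(2*(s+1)) * ((t+1)/(2*(s+1))) ^ (p*γ) * (A/B) ^ p with hc
  have hc0 : 0 ≤ c := by
    apply mul_nonneg (mul_nonneg (div_nonneg zero_le_one (by linarith))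
      (Real.rpow_nonneg (div_nonneg ht1.le (by linarith)) _))
    exact Real.rpow_nonneg (div_nonneg hA0 hBpos.le) _
  have hpt : ∀ τ ∈ J, c ≤
      1 / (τ + 1) * ((τ + 1) / (t + 1)) ^ (p * γ * Real.sign (τ - t)) *
        ‖greenFunction U V P τ t x‖ ^ p := by
    intro τ hτ
    obtain ⟨hτ1, hτ2⟩ := hτ
    have hτt : τ < t := by linarith
    have hτ0 : (0:ℝ) ≤ τ := by linarith
    have hτ1' : (0:ℝ) < τ + 1 := by linarith
    have hsign : Real.sign (τ - t) = -1 := Real.sign_of_neg (by linarith)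
    rw [hsign]
    have hwt : ((τ + 1) / (t + 1)) ^ (p * γ * (-1)) = ((t+1)/(τ+1)) ^ (p * γ) := by
      rw [mul_neg_one, Real.rpow_neg (div_nonneg hτ1'.le ht1.le),
        ← Real.inv_rpow (div_nonneg hτ1'.le ht1.le), inv_div]
    rw [hwt]
    have hgf : greenFunction U V P τ t = -((V τ t).comp (1 - P t)) := by
      simp only [greenFunction, if_neg (not_lt.mpr hτt.le), if_pos hτt]
    -- bound ‖(V s τ).comp (1 - P τ)‖ ≤ B
    have hVQn : ‖(V s τ).comp (1 - P τ)‖ ≤ M * (τ+1) ^ (α-1) * ((τ+1)/(s+1)) ^ ω :=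
      aux_VQ_norm hG hs hτ1
    have hfac1 : ((τ+1)/(s+1)) ^ ω ≤ 2 ^ ω := by
      apply Real.rpow_le_rpow (div_nonneg hτ1'.le hs1.le) _ hω.le
      rw [div_le_iff₀ hs1]
      linarith
    have hfac2 : (τ+1) ^ (α-1) ≤ 2 ^ (α+1) * (s+1) ^ (α-1) := by
      rcases le_or_gt 1 α with hA1 | hA1
      · have h1 : (τ+1) ^ (α-1) ≤ (2*(s+1)) ^ (α-1) :=
          Real.rpow_le_rpow hτ1'.le (by linarith) (by linarith)
        have h2 : ((2:ℝ)*(s+1)) ^ (α-1) = (2:ℝ) ^ (α-1) * (s+1) ^ (α-1) :=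
          Real.mul_rpow (by norm_num) hs1.le
        have h3 : (2:ℝ) ^ (α-1) ≤ 2 ^ (α+1) :=
          Real.rpow_le_rpow_of_exponent_le one_le_two (by linarith)
        nlinarith [Real.rpow_nonneg hs1.le (α-1)]
      · have h1 : (τ+1) ^ (α-1) ≤ (s+1) ^ (α-1) :=
          aux_rpow_anti hs1 (by linarith) (by linarith)
        have h2 : (1:ℝ) ≤ 2 ^ (α+1) := aux_one_le_rpow one_le_two (by linarith)
        nlinarith [Real.rpow_nonneg hs1.le (α-1)]
    have hBn : ‖(V s τ).comp (1 - P τ)‖ ≤ B := by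
      have hstep : M * (τ+1) ^ (α-1) * ((τ+1)/(s+1)) ^ ω
          ≤ M * (2 ^ (α+1) * (s+1) ^ (α-1)) * 2 ^ ω := by
        apply mul_le_mul (mul_le_mul_of_nonneg_left hfac2 (by linarith)) hfac1
          (Real.rpow_nonneg (div_nonneg hτ1'.le hs1.le) _)
        have : (0:ℝ) ≤ 2 ^ (α+1) * (s+1) ^ (α-1) :=
          mul_nonneg (Real.rpow_nonneg (by norm_num) _) (Real.rpow_nonneg hs1.le _)
        nlinarith
      have heqB : M * (2 ^ (α+1) * (s+1) ^ (α-1)) * 2 ^ ω = B := by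
        rw [hB]; ring
      linarith [hVQn]
    -- A ≤ B * ‖G τ t x‖
    have hAle : A ≤ B * ‖greenFunction U V P τ t x‖ := by
      have hf := aux_VQ_factor hU hC hs hτ1.le hτt.le x
      calc A = ‖V s t ((1 - P t) x)‖ := by rw [hA]; simp [ContinuousLinearMap.comp_apply]
      _ = ‖((V s τ).comp (1 - P τ)) (V τ t ((1 - P t) x))‖ := by
          rw [hf]; simp [ContinuousLinearMap.comp_apply]
      _ ≤ ‖(V s τ).comp (1 - P τ)‖ * ‖V τ t ((1 - P t) x)‖ := ContinuousLinearMap.le_opNorm _ _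
      _ ≤ B * ‖V τ t ((1 - P t) x)‖ := mul_le_mul_of_nonneg_right hBn (norm_nonneg _)
      _ = B * ‖greenFunction U V P τ t x‖ := by
          rw [hgf, ContinuousLinearMap.neg_apply, norm_neg, ContinuousLinearMap.comp_apply]
    have hGlow : A / B ≤ ‖greenFunction U V P τ t x‖ := by
      rw [div_le_iff₀ hBpos]
      linarith
    have h_i1 : 1/(2*(s+1)) ≤ 1/(τ+1) := by
      apply one_div_le_one_div_of_le hτ1'
      linarith
    have h_i2 : ((t+1)/(2*(s+1))) ^ (p*γ) ≤ ((t+1)/(τ+1)) ^ (p*γ) := by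
      apply Real.rpow_le_rpow (div_nonneg ht1.le (by linarith)) _
        (mul_nonneg (by linarith) hγ0.le)
      rw [div_le_div_iff₀ (by linarith) hτ1']
      nlinarith
    have h_i3 : (A/B) ^ p ≤ ‖greenFunction U V P τ t x‖ ^ p :=
      Real.rpow_le_rpow (div_nonneg hA0 hBpos.le) hGlow (by linarith)
    rw [hc]
    apply mul_le_mul (mul_le_mul h_i1 h_i2
        (Real.rpow_nonneg (div_nonneg ht1.le (by linarith)) _)
        (div_nonneg zero_le_one hτ1'.le))
      h_i3 (Real.rpow_nonneg (div_nonneg hA0 hBpos.le) _)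
    exact mul_nonneg (div_nonneg zero_le_one hτ1'.le)
      (Real.rpow_nonneg (div_nonneg ht1.le hτ1'.le) _)
  have hR0 : 0 ≤ D * (t+1) ^ (p*ε) * ‖x‖ ^ p :=
    mul_nonneg (mul_nonneg hD.le (Real.rpow_nonneg ht1.le _)) (Real.rpow_nonneg (norm_nonneg x) _)
  have hextract : c * (s+1) ≤ D * (t+1) ^ (p*ε) * ‖x‖ ^ p :=
    aux_setLIntegral_extract hJm hJs hc0 hvol hpt hR0 (hint t ht0 x)
  have hkey2 : 1/2 * ((t+1)/(2*(s+1))) ^ (p*γ) * (A/B) ^ p ≤ D * (t+1) ^ (p*ε) * ‖x‖ ^ p := by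
    have e : 1/2 * ((t+1)/(2*(s+1))) ^ (p*γ) * (A/B) ^ p = c * (s+1) := by
      rw [hc]
      field_simp
    rw [e]
    exact hextract
  have := aux_solve hA0 hBpos (div_pos ht1 (by linarith)) ht1 (norm_nonneg x) hp hD hkey2
  rwa [inv_div] at this

end AuxFar2
set_option maxHeartbeats 2000000

/-- Corollary 3.4 (the polynomial case `μ(t) = t + 1`): if
`‖G(t,s)‖ ≤ M (1/(s+1)) ((t+1)/(s+1))^{ω sign(t-s)} (s+1)^α` for `t ≠ s` and
`∫₀^∞ (1/(τ+1)) ((τ+1)/(t+1))^{pγ sign(τ-t)} ‖G(τ,t)x‖^p dτ ≤ D (t+1)^{pε} ‖x‖^p`,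
then `U` has a nonuniform polynomial dichotomy with projection valued function `P`. -/
theorem integral_estimate_implies_polynomial_dichotomy
    {X : Type*} [NormedAddCommGroup X] [NormedSpace ℝ X] [CompleteSpace X]
    (U V : ℝ → ℝ → X →L[ℝ] X) (P : ℝ → X →L[ℝ] X)
    (hU : IsEvolutionOperator U) (hP : IsProjectionValued P)
    (hC : CompatibleProjection U V P)
    (M ω α : ℝ) (hω : 0 < ω) (hα : 0 ≤ α) (hM : 1 ≤ M)
    (hG : ∀ t s, 0 ≤ t → 0 ≤ s → t ≠ s →
      ‖greenFunction U V P t s‖ ≤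
        M * (1 / (s + 1)) * ((t + 1) / (s + 1)) ^ (ω * Real.sign (t - s)) * (s + 1) ^ α)
    (p γ ε D : ℝ) (hp : 1 ≤ p) (hγ : α < γ) (hε : 0 ≤ ε) (hD : 0 < D)
    (hint : ∀ t, 0 ≤ t → ∀ x : X,
      ∫⁻ τ in Set.Ioi (0 : ℝ), ENNReal.ofReal
          (1 / (τ + 1) * ((τ + 1) / (t + 1)) ^ (p * γ * Real.sign (τ - t)) *
            ‖greenFunction U V P τ t x‖ ^ p)
        ≤ ENNReal.ofReal (D * (t + 1) ^ (p * ε) * ‖x‖ ^ p)) :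
    ∃ a b ε' N₁ N₂ : ℝ, 0 < a ∧ 0 < b ∧ 0 ≤ ε' ∧ 1 ≤ N₁ ∧ 1 ≤ N₂ ∧
      ∀ s t, 0 ≤ s → s ≤ t →
        ‖(U t s).comp (P s)‖ ≤ N₁ * ((t + 1) / (s + 1)) ^ (-a) * (s + 1) ^ ε' ∧
        ‖(V s t).comp (1 - P t)‖ ≤ N₂ * ((t + 1) / (s + 1)) ^ (-b) * (t + 1) ^ ε' := by
  have hγ0 : 0 < γ := lt_of_le_of_lt hα hγ
  have h2 : ∀ y : ℝ, (0:ℝ) < 2 ^ y := fun y => Real.rpow_pos_of_pos two_pos y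
  have hmaxD1 : (1:ℝ) ≤ max 1 (2*D) := le_max_left _ _
  set N : ℝ := 1 + M*2^ω + M*2^(ω+(γ+1-α)) + M*2^(ω+γ) + 2^(α+1)*2^ω*2^γ*M*(max 1 (2*D))
    with hN
  have ht1' : (0:ℝ) < M*2^ω := mul_pos (by linarith) (h2 _)
  have ht2' : (0:ℝ) < M*2^(ω+(γ+1-α)) := mul_pos (by linarith) (h2 _)
  have ht3' : (0:ℝ) < M*2^(ω+γ) := mul_pos (by linarith) (h2 _)
  have ht4' : (0:ℝ) < 2^(α+1)*2^ω*2^γ*M*(max 1 (2*D)) :=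
    mul_pos (mul_pos (mul_pos (mul_pos (h2 _) (h2 _)) (h2 _)) (by linarith)) (by linarith)
  have hN1 : (1:ℝ) ≤ N := by rw [hN]; linarith
  have hN0 : (0:ℝ) ≤ N := by linarith
  refine ⟨γ+1-α, γ, ε+α+γ, N, N, by linarith, hγ0, by linarith, hN1, hN1, ?_⟩
  intro s t hs hst
  have hs1 : (0:ℝ) < s + 1 := by linarith
  have ht1 : (0:ℝ) < t + 1 := by linarith
  have hr0 : (0:ℝ) < (t+1)/(s+1) := div_pos ht1 hs1
  have hexps : (s+1) ^ (α-1) ≤ (s+1) ^ (ε+α+γ) :=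
    Real.rpow_le_rpow_of_exponent_le (by linarith) (by linarith)
  have hexpt : (t+1) ^ (α-1) ≤ (t+1) ^ (ε+α+γ) :=
    Real.rpow_le_rpow_of_exponent_le (by linarith) (by linarith)
  rcases hst.eq_or_lt with heq | hlt
  · -- diagonal case t = s
    subst heq
    have hre : ((s+1)/(s+1) : ℝ) = 1 := div_self (ne_of_gt hs1)
    have hPb : ‖P s‖ ≤ M * 2^ω * (s+1) ^ (α-1) := by
      apply ContinuousLinearMap.opNorm_le_bound _
        (mul_nonneg (by linarith) (Real.rpow_nonneg hs1.le _))
      intro x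
      exact aux_P_norm hU hω hM hG hs x
    constructor
    · have hUid : (U s s).comp (P s) = P s := by
        rw [hU.1 s hs, ContinuousLinearMap.one_def, ContinuousLinearMap.id_comp]
      rw [hUid, hre, Real.one_rpow, mul_one]
      calc ‖P s‖ ≤ M * 2^ω * (s+1) ^ (α-1) := hPb
      _ ≤ N * (s+1) ^ (ε+α+γ) := by
          apply mul_le_mul (by rw [hN]; linarith) hexps (Real.rpow_nonneg hs1.le _) hN0
    · have hid : ∀ x : X, ((V s s).comp (1 - P s)) x = (1 - P s) x := by
        intro x
        have h := hC.2.2.1 s s hs le_rfl x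
        rw [hU.1 s hs] at h
        simpa using h
      rw [hre, Real.one_rpow, mul_one]
      have hone : (1:ℝ) ≤ (s+1) ^ (ε+α+γ) := aux_one_le_rpow (by linarith) (by linarith)
      apply ContinuousLinearMap.opNorm_le_bound _
        (mul_nonneg hN0 (Real.rpow_nonneg hs1.le _))
      intro x
      rw [hid x]
      have h1 : ‖(1 - P s) x‖ ≤ ‖x‖ + ‖P s x‖ := by
        simp only [ContinuousLinearMap.sub_apply, ContinuousLinearMap.one_apply]
        exact norm_sub_le _ _
      have h2' : ‖P s x‖ ≤ M * 2^ω * (s+1) ^ (α-1) * ‖x‖ := aux_P_norm hU hω hM hG hs x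
      have h3 : (s+1) ^ (α-1) ≤ (s+1) ^ (ε+α+γ) := hexps
      have h4 : 1 + M*2^ω ≤ N := by rw [hN]; linarith
      have h5 : M * 2^ω * (s+1) ^ (α-1) ≤ M * 2^ω * (s+1) ^ (ε+α+γ) :=
        mul_le_mul_of_nonneg_left h3 (by linarith)
      nlinarith [norm_nonneg x, Real.rpow_nonneg hs1.le (ε+α+γ),
        mul_le_mul_of_nonneg_right h4 (mul_nonneg (Real.rpow_nonneg hs1.le (ε+α+γ)) (norm_nonneg x)),
        mul_le_mul_of_nonneg_right h5 (norm_nonneg x),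
        mul_le_mul_of_nonneg_left hone (norm_nonneg x)]
  · rcases lt_or_ge t (2*s+1) with hnear | hfar
    · -- near-diagonal case s < t < 2s+1
      have hr2 : ((t+1)/(s+1) : ℝ) ≤ 2 := by
        rw [div_le_iff₀ hs1]; linarith
      have hrω : ((t+1)/(s+1) : ℝ) ^ ω ≤ 2 ^ ω :=
        Real.rpow_le_rpow hr0.le hr2 hω.le
      constructor
      · have hUPn := aux_UP_norm hG hs hlt
        have hsplit : (2:ℝ)^(ω+(γ+1-α)) * 2^(-(γ+1-α)) = 2^ω := by
          rw [← Real.rpow_add two_pos]; congr 1; ring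
        have hrainv : (2:ℝ)^(-(γ+1-α)) ≤ ((t+1)/(s+1)) ^ (-(γ+1-α)) :=
          aux_rpow_anti hr0 hr2 (by linarith)
        have hkey : M * 2^ω ≤ N * ((t+1)/(s+1)) ^ (-(γ+1-α)) := by
          calc M * 2^ω = (M*2^(ω+(γ+1-α))) * 2^(-(γ+1-α)) := by rw [mul_assoc, hsplit]
          _ ≤ N * 2^(-(γ+1-α)) := by
              apply mul_le_mul_of_nonneg_right (by rw [hN]; linarith) (h2 _).le
          _ ≤ N * ((t+1)/(s+1)) ^ (-(γ+1-α)) := mul_le_mul_of_nonneg_left hrainv hN0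
        calc ‖(U t s).comp (P s)‖ ≤ M * (s+1) ^ (α-1) * ((t+1)/(s+1)) ^ ω := hUPn
        _ ≤ M * (s+1) ^ (ε+α+γ) * 2 ^ ω := by
            apply mul_le_mul (mul_le_mul_of_nonneg_left hexps (by linarith)) hrω
              (Real.rpow_nonneg hr0.le _)
              (mul_nonneg (by linarith) (Real.rpow_nonneg hs1.le _))
        _ = (M * 2^ω) * (s+1) ^ (ε+α+γ) := by ring
        _ ≤ (N * ((t+1)/(s+1)) ^ (-(γ+1-α))) * (s+1) ^ (ε+α+γ) :=
            mul_le_mul_of_nonneg_right hkey (Real.rpow_nonneg hs1.le _)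
      · have hVQn := aux_VQ_norm hG hs hlt
        have hsplit : (2:ℝ)^(ω+γ) * 2^(-γ) = 2^ω := by
          rw [← Real.rpow_add two_pos]; congr 1; ring
        have hrainv : (2:ℝ)^(-γ) ≤ ((t+1)/(s+1)) ^ (-γ) :=
          aux_rpow_anti hr0 hr2 (by linarith)
        have hkey : M * 2^ω ≤ N * ((t+1)/(s+1)) ^ (-γ) := by
          calc M * 2^ω = (M*2^(ω+γ)) * 2^(-γ) := by rw [mul_assoc, hsplit]
          _ ≤ N * 2^(-γ) := by
              apply mul_le_mul_of_nonneg_right (by rw [hN]; linarith) (h2 _).le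
          _ ≤ N * ((t+1)/(s+1)) ^ (-γ) := mul_le_mul_of_nonneg_left hrainv hN0
        calc ‖(V s t).comp (1 - P t)‖ ≤ M * (t+1) ^ (α-1) * ((t+1)/(s+1)) ^ ω := hVQn
        _ ≤ M * (t+1) ^ (ε+α+γ) * 2 ^ ω := by
            apply mul_le_mul (mul_le_mul_of_nonneg_left hexpt (by linarith)) hrω
              (Real.rpow_nonneg hr0.le _)
              (mul_nonneg (by linarith) (Real.rpow_nonneg ht1.le _))
        _ = (M * 2^ω) * (t+1) ^ (ε+α+γ) := by ring
        _ ≤ (N * ((t+1)/(s+1)) ^ (-γ)) * (t+1) ^ (ε+α+γ) :=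
            mul_le_mul_of_nonneg_right hkey (Real.rpow_nonneg ht1.le _)
    · -- far case 2s+1 ≤ t
      have hw0 : (0:ℝ) ≤ (2*(s+1))/(t+1) := div_nonneg (by linarith) ht1.le
      have e1 : ((2*(s+1))/(t+1)) ^ γ = 2^γ * (s+1)^γ * ((t+1)^γ)⁻¹ := by
        rw [Real.div_rpow (by linarith) ht1.le, Real.mul_rpow (by norm_num) hs1.le,
          div_eq_mul_inv]
      have hCstN : 2^(α+1)*2^ω*M*(max 1 (2*D))*2^γ ≤ N := by rw [hN]; linarith
      constructor
      · set Kf : ℝ := (2^(α+1) * 2^ω * M * (t+1)^(α-1)) *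
          (max 1 (2*D) * (s+1)^ε * ((2*(s+1))/(t+1))^γ) with hKf
        have hKf0 : 0 ≤ Kf := by
          rw [hKf]
          apply mul_nonneg
          · exact mul_nonneg (mul_nonneg (mul_nonneg (h2 _).le (h2 _).le) (by linarith))
              (Real.rpow_nonneg ht1.le _)
          · exact mul_nonneg (mul_nonneg (by linarith) (Real.rpow_nonneg hs1.le _))
              (Real.rpow_nonneg hw0 _)
        have hop : ‖(U t s).comp (P s)‖ ≤ Kf := by
          apply ContinuousLinearMap.opNorm_le_bound _ hKf0
          intro x
          have h := aux_stable_far hU hP hC hω hα hM hG hp hγ0 hε hD hint hs hfar x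
          calc ‖((U t s).comp (P s)) x‖
              ≤ (2^(α+1) * 2^ω * M * (t+1)^(α-1)) *
                (max 1 (2*D) * (s+1)^ε * ‖x‖ * ((2*(s+1))/(t+1))^γ) := h
          _ = Kf * ‖x‖ := by rw [hKf]; ring
        have e3 : (t+1)^(α-1) * ((t+1)^γ)⁻¹ = ((t+1)^(γ+1-α))⁻¹ := by
          rw [← Real.rpow_neg ht1.le γ, ← Real.rpow_add ht1,
            show α - 1 + -γ = -(γ+1-α) by ring, Real.rpow_neg ht1.le]
        have e4 : (s+1)^ε * (s+1)^γ = (s+1)^(ε+γ) := (Real.rpow_add hs1 ε γ).symm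
        have er : ((t+1)/(s+1)) ^ (-(γ+1-α)) = (s+1)^(γ+1-α) * ((t+1)^(γ+1-α))⁻¹ := by
          rw [Real.rpow_neg hr0.le, Real.div_rpow ht1.le hs1.le, inv_div, div_eq_mul_inv]
        have e5 : (s+1)^(γ+1-α) * (s+1)^(ε+α+γ) = (s+1)^((γ+1-α)+(ε+α+γ)) :=
          (Real.rpow_add hs1 _ _).symm
        have h45 : (s+1)^(ε+γ) ≤ (s+1)^((γ+1-α)+(ε+α+γ)) :=
          Real.rpow_le_rpow_of_exponent_le (by linarith) (by linarith)
        have ekf : Kf = (2^(α+1)*2^ω*M*(max 1 (2*D))*2^γ) * (s+1)^(ε+γ) *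
            ((t+1)^(γ+1-α))⁻¹ := by
          rw [hKf, e1, ← e4, ← e3]; ring
        have etg : N * ((t+1)/(s+1)) ^ (-(γ+1-α)) * (s+1)^(ε+α+γ)
            = N * (s+1)^((γ+1-α)+(ε+α+γ)) * ((t+1)^(γ+1-α))⁻¹ := by
          rw [er, ← e5]; ring
        calc ‖(U t s).comp (P s)‖ ≤ Kf := hop
        _ = (2^(α+1)*2^ω*M*(max 1 (2*D))*2^γ) * (s+1)^(ε+γ) * ((t+1)^(γ+1-α))⁻¹ := ekf
        _ ≤ N * (s+1)^((γ+1-α)+(ε+α+γ)) * ((t+1)^(γ+1-α))⁻¹ := by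
            apply mul_le_mul_of_nonneg_right
              (mul_le_mul hCstN h45 (Real.rpow_nonneg hs1.le _) hN0)
              (inv_nonneg.mpr (Real.rpow_nonneg ht1.le _))
        _ = N * ((t+1)/(s+1)) ^ (-(γ+1-α)) * (s+1)^(ε+α+γ) := etg.symm
      · set Kf : ℝ := (2^(α+1) * 2^ω * M * (s+1)^(α-1)) *
          (max 1 (2*D) * (t+1)^ε * ((2*(s+1))/(t+1))^γ) with hKf
        have hKf0 : 0 ≤ Kf := by
          rw [hKf]
          apply mul_nonneg
          · exact mul_nonneg (mul_nonneg (mul_nonneg (h2 _).le (h2 _).le) (by linarith))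
              (Real.rpow_nonneg hs1.le _)
          · exact mul_nonneg (mul_nonneg (by linarith) (Real.rpow_nonneg ht1.le _))
              (Real.rpow_nonneg hw0 _)
        have hop : ‖(V s t).comp (1 - P t)‖ ≤ Kf := by
          apply ContinuousLinearMap.opNorm_le_bound _ hKf0
          intro x
          have h := aux_unstable_far hU hC hω hα hM hG hp hγ0 hε hD hint hs hfar x
          calc ‖((V s t).comp (1 - P t)) x‖
              ≤ (2^(α+1) * 2^ω * M * (s+1)^(α-1)) *
                (max 1 (2*D) * (t+1)^ε * ‖x‖ * ((2*(s+1))/(t+1))^γ) := h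
          _ = Kf * ‖x‖ := by rw [hKf]; ring
        have er : ((t+1)/(s+1)) ^ (-γ) = (s+1)^γ * ((t+1)^γ)⁻¹ := by
          rw [Real.rpow_neg hr0.le, Real.div_rpow ht1.le hs1.le, inv_div, div_eq_mul_inv]
        have hsa : (s+1)^(α-1) ≤ (t+1)^α := by
          calc (s+1)^(α-1) ≤ (s+1)^α :=
              Real.rpow_le_rpow_of_exponent_le (by linarith) (by linarith)
          _ ≤ (t+1)^α := Real.rpow_le_rpow hs1.le (by linarith) hα
        have hta : (t+1)^α * (t+1)^ε = (t+1)^(α+ε) := (Real.rpow_add ht1 _ _).symm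
        have htexp : (t+1)^(α+ε) ≤ (t+1)^(ε+α+γ) :=
          Real.rpow_le_rpow_of_exponent_le (by linarith) (by linarith)
        have hmain : (2^(α+1)*2^ω*M*(max 1 (2*D))*2^γ) * ((s+1)^(α-1) * (t+1)^ε)
            ≤ N * (t+1)^(ε+α+γ) := by
          have hC0 : (0:ℝ) ≤ 2^(α+1)*2^ω*M*(max 1 (2*D))*2^γ := by
            apply mul_nonneg (mul_nonneg (mul_nonneg (mul_nonneg (h2 _).le (h2 _).le)
              (by linarith)) (by linarith)) (h2 _).le
          have h1 : (s+1)^(α-1) * (t+1)^ε ≤ (t+1)^(ε+α+γ) := by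
            calc (s+1)^(α-1) * (t+1)^ε ≤ (t+1)^α * (t+1)^ε :=
                mul_le_mul_of_nonneg_right hsa (Real.rpow_nonneg ht1.le _)
            _ = (t+1)^(α+ε) := hta
            _ ≤ (t+1)^(ε+α+γ) := htexp
          calc (2^(α+1)*2^ω*M*(max 1 (2*D))*2^γ) * ((s+1)^(α-1) * (t+1)^ε)
              ≤ (2^(α+1)*2^ω*M*(max 1 (2*D))*2^γ) * (t+1)^(ε+α+γ) :=
              mul_le_mul_of_nonneg_left h1 hC0
          _ ≤ N * (t+1)^(ε+α+γ) :=
              mul_le_mul_of_nonneg_right hCstN (Real.rpow_nonneg ht1.le _)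
        have ekf : Kf = ((2^(α+1)*2^ω*M*(max 1 (2*D))*2^γ) * ((s+1)^(α-1) * (t+1)^ε)) *
            ((s+1)^γ * ((t+1)^γ)⁻¹) := by
          rw [hKf, e1]; ring
        have etg : N * ((t+1)/(s+1)) ^ (-γ) * (t+1)^(ε+α+γ)
            = (N * (t+1)^(ε+α+γ)) * ((s+1)^γ * ((t+1)^γ)⁻¹) := by
          rw [er]; ring
        calc ‖(V s t).comp (1 - P t)‖ ≤ Kf := hop
        _ = ((2^(α+1)*2^ω*M*(max 1 (2*D))*2^γ) * ((s+1)^(α-1) * (t+1)^ε)) *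
            ((s+1)^γ * ((t+1)^γ)⁻¹) := ekf
        _ ≤ (N * (t+1)^(ε+α+γ)) * ((s+1)^γ * ((t+1)^γ)⁻¹) := by
            apply mul_le_mul_of_nonneg_right hmain
              (mul_nonneg (Real.rpow_nonneg hs1.le _) (inv_nonneg.mpr (Real.rpow_nonneg ht1.le _)))
        _ = N * ((t+1)/(s+1)) ^ (-γ) * (t+1)^(ε+α+γ) := etg.symm
end
end

section
/- Let μ(t) = t + √(t²+1) for t ≥ 0, and let a,b > 1 and α ≥ 0 satisfy α + 1 < min{a,b}. Define the evolution operator U : Δ → B(ℝ²) by U(t,s)(x₁,x₂) = (U₁(t,s)x₁, U₂(t,s)x₂), where U₁(t,s) = (μ'(s)/μ'(t)) (μ(t)/μ(s))^{−a} e^{α sin²(s) log μ(s) − α sin²(t) log μ(t)} and U₂(t,s) = (μ'(s)/μ'(t)) (μ(s)/μ(t))^{−b} e^{α sin²(t) log μ(t) − α sin²(s) log μ(s)}, and let P(t)(x₁,x₂) = (x₁,0). Then P is a projection valued function compatible with U, and U has a nonuniform μ-dichotomy with projection valued function P. -/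
open Real MeasureTheory Filter

noncomputable section

variable {X : Type*} [NormedAddCommGroup X] [NormedSpace ℝ X]

/-- Example 3.5: with `μ(t) = t + √(t²+1)`, `a, b > 1`, `α ≥ 0`, `α + 1 < min{a,b}`,
the diagonal evolution operator given by
`U₁(t,s) = (μ'(s)/μ'(t)) (μ(t)/μ(s))^{-a} e^{α sin²(s) log μ(s) - α sin²(t) log μ(t)}` and
`U₂(t,s) = (μ'(s)/μ'(t)) (μ(s)/μ(t))^{-b} e^{α sin²(t) log μ(t) - α sin²(s) log μ(s)}`
has a nonuniform μ-dichotomy with projection valued function `P(t)(x₁,x₂) = (x₁,0)`. -/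
theorem example_general_growth_rate_dichotomy
    (a b α : ℝ) (ha : 1 < a) (hb : 1 < b) (hα : 0 ≤ α) (hab : α + 1 < min a b)
    (μ : ℝ → ℝ) (hμ : ∀ t, μ t = t + Real.sqrt (t ^ 2 + 1))
    (U : ℝ → ℝ → (ℝ × ℝ) →L[ℝ] (ℝ × ℝ)) (P : ℝ → (ℝ × ℝ) →L[ℝ] (ℝ × ℝ))
    (hUdef : ∀ s t, 0 ≤ s → s ≤ t → ∀ x : ℝ × ℝ,
      U t s x =
        (deriv μ s / deriv μ t * (μ t / μ s) ^ (-a) *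
            Real.exp (α * Real.sin s ^ 2 * Real.log (μ s) -
              α * Real.sin t ^ 2 * Real.log (μ t)) * x.1,
         deriv μ s / deriv μ t * (μ s / μ t) ^ (-b) *
            Real.exp (α * Real.sin t ^ 2 * Real.log (μ t) -
              α * Real.sin s ^ 2 * Real.log (μ s)) * x.2))
    (hPdef : ∀ t, 0 ≤ t → ∀ x : ℝ × ℝ, P t x = (x.1, 0)) :
    IsEvolutionOperator U ∧ IsProjectionValued P ∧
      ∃ V : ℝ → ℝ → (ℝ × ℝ) →L[ℝ] (ℝ × ℝ),
        CompatibleProjection U V P ∧ NonuniformMuDichotomy μ U V P := by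

  -- replace μ by its explicit formula
  have hμfun : μ = fun t => t + Real.sqrt (t ^ 2 + 1) := funext hμ
  subst hμfun
  set M : ℝ → ℝ := fun t => t + Real.sqrt (t ^ 2 + 1) with hMeq
  -- basic facts about M
  have hsq : ∀ t : ℝ, 0 < Real.sqrt (t ^ 2 + 1) := fun t => Real.sqrt_pos.mpr (by positivity)
  have habs : ∀ t : ℝ, |t| < Real.sqrt (t ^ 2 + 1) := fun t => by
    rw [← Real.sqrt_sq_eq_abs]
    exact Real.sqrt_lt_sqrt (sq_nonneg t) (by linarith)
  have hMpos : ∀ t, 0 < M t := fun t => by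
    have h1 := habs t; have h2 := neg_abs_le t
    simp only [hMeq]; linarith
  have hMone : ∀ t, 0 ≤ t → 1 ≤ M t := fun t ht => by
    have h1 : Real.sqrt 1 ≤ Real.sqrt (t ^ 2 + 1) := Real.sqrt_le_sqrt (by nlinarith)
    rw [Real.sqrt_one] at h1
    simp only [hMeq]; linarith
  have hMmono : ∀ s t : ℝ, 0 ≤ s → s ≤ t → M s ≤ M t := fun s t hs hst => by
    have h1 : Real.sqrt (s ^ 2 + 1) ≤ Real.sqrt (t ^ 2 + 1) := Real.sqrt_le_sqrt (by nlinarith)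
    simp only [hMeq]; linarith
  -- the derivative of M
  have hder : ∀ t : ℝ, HasDerivAt M (1 + t / Real.sqrt (t ^ 2 + 1)) t := by
    intro t
    have h1 : HasDerivAt (fun t : ℝ => t ^ 2 + 1) (2 * t) t := by
      simpa using ((hasDerivAt_pow 2 t).add_const 1)
    have h2 := (Real.hasDerivAt_sqrt (by positivity : (t ^ 2 + 1 : ℝ) ≠ 0)).comp t h1
    have h3 := (hasDerivAt_id t).add h2
    have hs : Real.sqrt (t ^ 2 + 1) ≠ 0 := (hsq t).ne'
    rw [hMeq]
    convert h3 using 1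
    · rfl
    · rfl
    · rfl
    rw [one_div, inv_mul_eq_div, mul_div_mul_left _ _ (two_ne_zero' ℝ)]
  set D : ℝ → ℝ := fun t => 1 + t / Real.sqrt (t ^ 2 + 1) with hDeq
  have hd : deriv M = D := funext fun t => (hder t).deriv
  rw [hd] at hUdef
  have hDpos : ∀ t, 0 < D t := fun t => by
    have h2 : |t| / Real.sqrt (t ^ 2 + 1) < 1 := (div_lt_one (hsq t)).mpr (habs t)
    have h3 : -|t| / Real.sqrt (t ^ 2 + 1) ≤ t / Real.sqrt (t ^ 2 + 1) := by
      gcongr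
      exact neg_abs_le t
    have h4 : -|t| / Real.sqrt (t ^ 2 + 1) = -(|t| / Real.sqrt (t ^ 2 + 1)) := neg_div _ _
    simp only [hDeq]; linarith
  have hDle : ∀ t : ℝ, D t ≤ 2 := fun t => by
    have h2 : t / Real.sqrt (t ^ 2 + 1) ≤ 1 := by
      rw [div_le_one (hsq t)]
      exact (le_abs_self t).trans (habs t).le
    simp only [hDeq]; linarith
  have hDge : ∀ t : ℝ, 0 ≤ t → 1 ≤ D t := fun t ht => by
    have h2 : 0 ≤ t / Real.sqrt (t ^ 2 + 1) := div_nonneg ht (hsq t).le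
    simp only [hDeq]; linarith
  have hDdiv : ∀ s t : ℝ, 0 ≤ s → 0 ≤ t → D s / D t ≤ 2 := fun s t hs ht => by
    rw [div_le_iff₀ (hDpos t)]
    nlinarith [hDle s, hDge t ht]
  -- facts about the exponent A t = α sin² t log (M t)
  have hAnonneg : ∀ t, 0 ≤ t → 0 ≤ α * Real.sin t ^ 2 * Real.log (M t) := fun t ht =>
    mul_nonneg (mul_nonneg hα (sq_nonneg _)) (Real.log_nonneg (hMone t ht))
  have hAle : ∀ t, 0 ≤ t → α * Real.sin t ^ 2 * Real.log (M t) ≤ α * Real.log (M t) := by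
    intro t ht
    have h1 : Real.sin t ^ 2 ≤ 1 := Real.sin_sq_le_one t
    have h2 : 0 ≤ Real.log (M t) := Real.log_nonneg (hMone t ht)
    have h3 : α * Real.sin t ^ 2 ≤ α := by nlinarith
    exact mul_le_mul_of_nonneg_right h3 h2
  have hexp_bound : ∀ s t, 0 ≤ s → s ≤ t →
      Real.exp (α * Real.sin s ^ 2 * Real.log (M s) - α * Real.sin t ^ 2 * Real.log (M t)) ≤
        M s ^ α := by
    intro s t hs hst
    have ht := hs.trans hst
    calc Real.exp (α * Real.sin s ^ 2 * Real.log (M s) - α * Real.sin t ^ 2 * Real.log (M t))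
        ≤ Real.exp (α * Real.log (M s)) :=
          Real.exp_le_exp.mpr (by linarith [hAnonneg t ht, hAle s hs])
      _ = M s ^ α := by rw [Real.rpow_def_of_pos (hMpos s), mul_comm]
  have hflip : ∀ s t : ℝ, (M s / M t) ^ b = (M t / M s) ^ (-b) := by
    intro s t
    rw [Real.rpow_neg (div_pos (hMpos t) (hMpos s)).le,
      ← Real.inv_rpow (div_pos (hMpos t) (hMpos s)).le, inv_div]
  have hmulrpow : ∀ (c x y z : ℝ), 0 < x → 0 < y → 0 < z →
      (x / y) ^ c * (y / z) ^ c = (x / z) ^ c := by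
    intro c x y z hx hy hz
    rw [← Real.mul_rpow (by positivity) (by positivity)]
    congr 1
    field_simp
  -- the inverse operator V
  set proj2 : (ℝ × ℝ) →L[ℝ] (ℝ × ℝ) :=
    (0 : (ℝ × ℝ) →L[ℝ] ℝ).prod (ContinuousLinearMap.snd ℝ ℝ ℝ) with hproj
  set V : ℝ → ℝ → (ℝ × ℝ) →L[ℝ] (ℝ × ℝ) := fun s t =>
    (D t / D s * (M s / M t) ^ b *
      Real.exp (α * Real.sin s ^ 2 * Real.log (M s) -
        α * Real.sin t ^ 2 * Real.log (M t))) • proj2 with hVeq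
  have hVapp : ∀ s t (x : ℝ × ℝ), V s t x =
      (0, (D t / D s * (M s / M t) ^ b *
        Real.exp (α * Real.sin s ^ 2 * Real.log (M s) -
          α * Real.sin t ^ 2 * Real.log (M t))) * x.2) := by
    intro s t x
    rw [hVeq, hproj]
    simp [Prod.smul_mk, smul_eq_mul]
  -- cancellation
  have hcanc : ∀ s t : ℝ,
      (D s / D t * (M s / M t) ^ (-b) *
        Real.exp (α * Real.sin t ^ 2 * Real.log (M t) -
          α * Real.sin s ^ 2 * Real.log (M s))) *
      (D t / D s * (M s / M t) ^ b *
        Real.exp (α * Real.sin s ^ 2 * Real.log (M s) -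
          α * Real.sin t ^ 2 * Real.log (M t))) = 1 := by
    intro s t
    have h1 : (M s / M t) ^ (-b) * (M s / M t) ^ b = 1 := by
      rw [← Real.rpow_add (div_pos (hMpos s) (hMpos t)), neg_add_cancel, Real.rpow_zero]
    have h2 : Real.exp (α * Real.sin t ^ 2 * Real.log (M t) -
          α * Real.sin s ^ 2 * Real.log (M s)) *
        Real.exp (α * Real.sin s ^ 2 * Real.log (M s) -
          α * Real.sin t ^ 2 * Real.log (M t)) = 1 := by
      rw [← Real.exp_add]
      rw [show (α * Real.sin t ^ 2 * Real.log (M t) - α * Real.sin s ^ 2 * Real.log (M s)) +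
        (α * Real.sin s ^ 2 * Real.log (M s) - α * Real.sin t ^ 2 * Real.log (M t)) = 0 by ring]
      exact Real.exp_zero
    have h3 : D s / D t * (D t / D s) = 1 := by
      field_simp [(hDpos s).ne', (hDpos t).ne']
    calc (D s / D t * (M s / M t) ^ (-b) *
        Real.exp (α * Real.sin t ^ 2 * Real.log (M t) -
          α * Real.sin s ^ 2 * Real.log (M s))) *
      (D t / D s * (M s / M t) ^ b *
        Real.exp (α * Real.sin s ^ 2 * Real.log (M s) -
          α * Real.sin t ^ 2 * Real.log (M t)))
        = (D s / D t * (D t / D s)) * ((M s / M t) ^ (-b) * (M s / M t) ^ b) *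
          (Real.exp (α * Real.sin t ^ 2 * Real.log (M t) -
            α * Real.sin s ^ 2 * Real.log (M s)) *
          Real.exp (α * Real.sin s ^ 2 * Real.log (M s) -
            α * Real.sin t ^ 2 * Real.log (M t))) := by ring
      _ = 1 := by rw [h1, h2, h3]; norm_num
  -- continuity ingredients
  have hMcont : Continuous M := by
    rw [hMeq]
    exact continuous_id.add (Real.continuous_sqrt.comp ((continuous_pow 2).add continuous_const))
  have hDcont : Continuous D := by
    rw [hDeq]
    exact continuous_const.add (continuous_id.div
      (Real.continuous_sqrt.comp ((continuous_pow 2).add continuous_const)) fun t => (hsq t).ne')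
  clear_value M D proj2 V
  refine ⟨⟨?_, ?_, ?_⟩, ⟨?_, ?_⟩, V, ⟨?_, ?_, ?_, ?_⟩, ?_⟩
  · -- U t t = 1
    intro t ht
    refine ContinuousLinearMap.ext fun x => ?_
    rw [hUdef t t ht le_rfl, ContinuousLinearMap.one_apply]
    rw [div_self (hDpos t).ne', div_self (hMpos t).ne', sub_self, Real.exp_zero,
      Real.one_rpow, Real.one_rpow]
    simp
  · -- cocycle property
    intro s τ t hs hsτ hτt
    refine ContinuousLinearMap.ext fun x => ?_
    rw [ContinuousLinearMap.comp_apply, hUdef s τ hs hsτ, hUdef τ t (hs.trans hsτ) hτt,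
      hUdef s t hs (hsτ.trans hτt)]
    have e1 : (M t / M τ) ^ (-a) * (M τ / M s) ^ (-a) = (M t / M s) ^ (-a) :=
      hmulrpow _ _ _ _ (hMpos t) (hMpos τ) (hMpos s)
    have e2 : (M s / M τ) ^ (-b) * (M τ / M t) ^ (-b) = (M s / M t) ^ (-b) :=
      hmulrpow _ _ _ _ (hMpos s) (hMpos τ) (hMpos t)
    have hbflip : ∀ u v : ℝ, (M u / M v) ^ (-b) = (M v / M u) ^ b := fun u v =>
      (hflip v u).symm
    have e3 : Real.exp (α * Real.sin s ^ 2 * Real.log (M s) -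
          α * Real.sin t ^ 2 * Real.log (M t)) =
        Real.exp (α * Real.sin τ ^ 2 * Real.log (M τ) -
          α * Real.sin t ^ 2 * Real.log (M t)) *
        Real.exp (α * Real.sin s ^ 2 * Real.log (M s) -
          α * Real.sin τ ^ 2 * Real.log (M τ)) := by
      rw [← Real.exp_add]; congr 1; ring
    have e4 : Real.exp (α * Real.sin t ^ 2 * Real.log (M t) -
          α * Real.sin s ^ 2 * Real.log (M s)) =
        Real.exp (α * Real.sin t ^ 2 * Real.log (M t) -
          α * Real.sin τ ^ 2 * Real.log (M τ)) *
        Real.exp (α * Real.sin τ ^ 2 * Real.log (M τ) -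
          α * Real.sin s ^ 2 * Real.log (M s)) := by
      rw [← Real.exp_add]; congr 1; ring
    dsimp only
    rw [Prod.mk.injEq]
    constructor
    · rw [← e1, e3]
      field_simp [(hDpos s).ne', (hDpos τ).ne', (hDpos t).ne']
    · rw [← e2, e4]
      field_simp [(hDpos s).ne', (hDpos τ).ne', (hDpos t).ne']
  · -- continuity of U
    intro x
    refine ContinuousOn.congr (f := fun q : ℝ × ℝ =>
      ((D q.2 / D q.1 * (M q.1 / M q.2) ^ (-a) *
          Real.exp (α * Real.sin q.2 ^ 2 * Real.log (M q.2) -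
            α * Real.sin q.1 ^ 2 * Real.log (M q.1))) * x.1,
       (D q.2 / D q.1 * (M q.2 / M q.1) ^ (-b) *
          Real.exp (α * Real.sin q.1 ^ 2 * Real.log (M q.1) -
            α * Real.sin q.2 ^ 2 * Real.log (M q.2))) * x.2)) ?_ ?_
    · have hlog1 : Continuous fun q : ℝ × ℝ => Real.log (M q.1) :=
        Continuous.log (hMcont.comp continuous_fst) fun q => (hMpos q.1).ne'
      have hlog2 : Continuous fun q : ℝ × ℝ => Real.log (M q.2) :=
        Continuous.log (hMcont.comp continuous_snd) fun q => (hMpos q.2).ne'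
      have hsin1 : Continuous fun q : ℝ × ℝ => Real.sin q.1 ^ 2 :=
        (Real.continuous_sin.comp continuous_fst).pow 2
      have hsin2 : Continuous fun q : ℝ × ℝ => Real.sin q.2 ^ 2 :=
        (Real.continuous_sin.comp continuous_snd).pow 2
      have hDD : Continuous fun q : ℝ × ℝ => D q.2 / D q.1 :=
        (hDcont.comp continuous_snd).div (hDcont.comp continuous_fst)
          fun q => (hDpos q.1).ne'
      have hr1 : Continuous fun q : ℝ × ℝ => (M q.1 / M q.2) ^ (-a) := by
        apply Continuous.rpow_const
        · exact (hMcont.comp continuous_fst).div (hMcont.comp continuous_snd)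
            fun q => (hMpos q.2).ne'
        · exact fun q => Or.inl (div_pos (hMpos q.1) (hMpos q.2)).ne'
      have hr2 : Continuous fun q : ℝ × ℝ => (M q.2 / M q.1) ^ (-b) := by
        apply Continuous.rpow_const
        · exact (hMcont.comp continuous_snd).div (hMcont.comp continuous_fst)
            fun q => (hMpos q.1).ne'
        · exact fun q => Or.inl (div_pos (hMpos q.2) (hMpos q.1)).ne'
      have he1 : Continuous fun q : ℝ × ℝ =>
          Real.exp (α * Real.sin q.2 ^ 2 * Real.log (M q.2) -
            α * Real.sin q.1 ^ 2 * Real.log (M q.1)) :=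
        Real.continuous_exp.comp
          (((continuous_const.mul hsin2).mul hlog2).sub
            ((continuous_const.mul hsin1).mul hlog1))
      have he2 : Continuous fun q : ℝ × ℝ =>
          Real.exp (α * Real.sin q.1 ^ 2 * Real.log (M q.1) -
            α * Real.sin q.2 ^ 2 * Real.log (M q.2)) :=
        Real.continuous_exp.comp
          (((continuous_const.mul hsin1).mul hlog1).sub
            ((continuous_const.mul hsin2).mul hlog2))
      exact (Continuous.prodMk
        (((hDD.mul hr1).mul he1).mul continuous_const)
        (((hDD.mul hr2).mul he2).mul continuous_const)).continuousOn
    · intro q hq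
      exact hUdef q.2 q.1 hq.1 hq.2 x
  · -- P t projection
    intro t ht
    refine ContinuousLinearMap.ext fun x => ?_
    simp [ContinuousLinearMap.comp_apply, hPdef t ht]
  · -- continuity of P
    intro x
    refine ContinuousOn.congr (f := fun _ : ℝ => ((x.1 : ℝ), (0 : ℝ)))
      continuousOn_const ?_
    intro t ht
    exact hPdef t ht x
  · -- P U = U P
    intro s t hs hst
    have ht := hs.trans hst
    refine ContinuousLinearMap.ext fun x => ?_
    rw [ContinuousLinearMap.comp_apply, ContinuousLinearMap.comp_apply,
      hUdef s t hs hst, hPdef t ht, hPdef s hs, hUdef s t hs hst]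
    simp
  · -- Q V = V
    intro s t hs hst x
    have ht := hs.trans hst
    have hQx : ((1 : (ℝ × ℝ) →L[ℝ] (ℝ × ℝ)) - P t) x = (0, x.2) := by
      rw [ContinuousLinearMap.sub_apply, ContinuousLinearMap.one_apply, hPdef t ht]
      exact Prod.ext (by simp) (by simp)
    rw [hQx, hVapp, ContinuousLinearMap.sub_apply, ContinuousLinearMap.one_apply,
      hPdef s hs]
    exact Prod.ext (by simp) (by simp)
  · -- U V Q = Q
    intro s t hs hst x
    have ht := hs.trans hst
    have hQx : ((1 : (ℝ × ℝ) →L[ℝ] (ℝ × ℝ)) - P t) x = (0, x.2) := by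
      rw [ContinuousLinearMap.sub_apply, ContinuousLinearMap.one_apply, hPdef t ht]
      exact Prod.ext (by simp) (by simp)
    rw [hQx, hVapp, hUdef s t hs hst]
    refine Prod.ext (by simp) ?_
    calc D s / D t * (M s / M t) ^ (-b) *
          Real.exp (α * Real.sin t ^ 2 * Real.log (M t) -
            α * Real.sin s ^ 2 * Real.log (M s)) *
        (D t / D s * (M s / M t) ^ b *
          Real.exp (α * Real.sin s ^ 2 * Real.log (M s) -
            α * Real.sin t ^ 2 * Real.log (M t)) * x.2)
        = (D s / D t * (M s / M t) ^ (-b) *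
            Real.exp (α * Real.sin t ^ 2 * Real.log (M t) -
              α * Real.sin s ^ 2 * Real.log (M s)) *
          (D t / D s * (M s / M t) ^ b *
            Real.exp (α * Real.sin s ^ 2 * Real.log (M s) -
              α * Real.sin t ^ 2 * Real.log (M t)))) * x.2 := by ring
      _ = x.2 := by rw [hcanc s t]; ring
  · -- V U Q = Q
    intro s t hs hst x
    have hQx : ((1 : (ℝ × ℝ) →L[ℝ] (ℝ × ℝ)) - P s) x = (0, x.2) := by
      rw [ContinuousLinearMap.sub_apply, ContinuousLinearMap.one_apply, hPdef s hs]
      exact Prod.ext (by simp) (by simp)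
    rw [hQx, hUdef s t hs hst, hVapp]
    refine Prod.ext (by simp) ?_
    calc D t / D s * (M s / M t) ^ b *
          Real.exp (α * Real.sin s ^ 2 * Real.log (M s) -
            α * Real.sin t ^ 2 * Real.log (M t)) *
        (D s / D t * (M s / M t) ^ (-b) *
          Real.exp (α * Real.sin t ^ 2 * Real.log (M t) -
            α * Real.sin s ^ 2 * Real.log (M s)) * x.2)
        = (D s / D t * (M s / M t) ^ (-b) *
            Real.exp (α * Real.sin t ^ 2 * Real.log (M t) -
              α * Real.sin s ^ 2 * Real.log (M s)) *
          (D t / D s * (M s / M t) ^ b *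
            Real.exp (α * Real.sin s ^ 2 * Real.log (M s) -
              α * Real.sin t ^ 2 * Real.log (M t)))) * x.2 := by ring
      _ = x.2 := by rw [hcanc s t]; ring
  · -- the dichotomy
    refine ⟨a, b, α, 2, 2, by linarith, by linarith, hα, one_le_two, one_le_two, ?_⟩
    intro s t hs hst
    have ht := hs.trans hst
    have hRa : (0:ℝ) ≤ (M t / M s) ^ (-a) :=
      (Real.rpow_pos_of_pos (div_pos (hMpos t) (hMpos s)) _).le
    have hRb : (0:ℝ) ≤ (M t / M s) ^ (-b) :=
      (Real.rpow_pos_of_pos (div_pos (hMpos t) (hMpos s)) _).le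
    have hMsα : (0:ℝ) ≤ M s ^ α := (Real.rpow_pos_of_pos (hMpos s) _).le
    have hMtα : (0:ℝ) ≤ M t ^ α := (Real.rpow_pos_of_pos (hMpos t) _).le
    constructor
    · apply ContinuousLinearMap.opNorm_le_bound
      · exact mul_nonneg (mul_nonneg (by norm_num) hRa) hMsα
      intro x
      rw [ContinuousLinearMap.comp_apply, hPdef s hs, hUdef s t hs hst]
      simp only [mul_zero]
      have hnorm : ‖((D s / D t * (M t / M s) ^ (-a) *
          Real.exp (α * Real.sin s ^ 2 * Real.log (M s) -
            α * Real.sin t ^ 2 * Real.log (M t))) * x.1, (0:ℝ))‖ =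
          |(D s / D t * (M t / M s) ^ (-a) *
          Real.exp (α * Real.sin s ^ 2 * Real.log (M s) -
            α * Real.sin t ^ 2 * Real.log (M t)))| * |x.1| := by
        rw [Prod.norm_def]
        simp only [norm_zero, Real.norm_eq_abs]
        rw [max_eq_left (abs_nonneg _), abs_mul]
      rw [hnorm]
      have hcpos : 0 < D s / D t * (M t / M s) ^ (-a) *
          Real.exp (α * Real.sin s ^ 2 * Real.log (M s) -
            α * Real.sin t ^ 2 * Real.log (M t)) := by
        exact mul_pos (mul_pos (div_pos (hDpos s) (hDpos t))
          (Real.rpow_pos_of_pos (div_pos (hMpos t) (hMpos s)) (-a))) (Real.exp_pos _)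
      rw [abs_of_pos hcpos]
      have hc1 : D s / D t * (M t / M s) ^ (-a) *
          Real.exp (α * Real.sin s ^ 2 * Real.log (M s) -
            α * Real.sin t ^ 2 * Real.log (M t)) ≤
          2 * (M t / M s) ^ (-a) * M s ^ α := by
        calc D s / D t * (M t / M s) ^ (-a) *
            Real.exp (α * Real.sin s ^ 2 * Real.log (M s) -
              α * Real.sin t ^ 2 * Real.log (M t))
            ≤ 2 * (M t / M s) ^ (-a) *
              Real.exp (α * Real.sin s ^ 2 * Real.log (M s) -
                α * Real.sin t ^ 2 * Real.log (M t)) :=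
              mul_le_mul_of_nonneg_right
                (mul_le_mul_of_nonneg_right (hDdiv s t hs ht) hRa) (Real.exp_pos _).le
          _ ≤ 2 * (M t / M s) ^ (-a) * M s ^ α :=
              mul_le_mul_of_nonneg_left (hexp_bound s t hs hst)
                (mul_nonneg (by norm_num) hRa)
      have hx1 : |x.1| ≤ ‖x‖ := by
        rw [← Real.norm_eq_abs]; exact norm_fst_le x
      exact mul_le_mul hc1 hx1 (abs_nonneg _)
        (mul_nonneg (mul_nonneg (by norm_num) hRa) hMsα)
    · apply ContinuousLinearMap.opNorm_le_bound
      · exact mul_nonneg (mul_nonneg (by norm_num) hRb) hMtα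
      intro x
      rw [ContinuousLinearMap.comp_apply]
      have hQx : ((1 : (ℝ × ℝ) →L[ℝ] (ℝ × ℝ)) - P t) x = (0, x.2) := by
        rw [ContinuousLinearMap.sub_apply, ContinuousLinearMap.one_apply, hPdef t ht]
        exact Prod.ext (by simp) (by simp)
      rw [hQx, hVapp]
      have hE : 0 < D t / D s * (M s / M t) ^ b *
          Real.exp (α * Real.sin s ^ 2 * Real.log (M s) -
            α * Real.sin t ^ 2 * Real.log (M t)) := by
        exact mul_pos (mul_pos (div_pos (hDpos t) (hDpos s))
          (Real.rpow_pos_of_pos (div_pos (hMpos s) (hMpos t)) b)) (Real.exp_pos _)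
      have hnorm : ‖((0:ℝ), (D t / D s * (M s / M t) ^ b *
          Real.exp (α * Real.sin s ^ 2 * Real.log (M s) -
            α * Real.sin t ^ 2 * Real.log (M t))) * x.2)‖ =
          (D t / D s * (M s / M t) ^ b *
          Real.exp (α * Real.sin s ^ 2 * Real.log (M s) -
            α * Real.sin t ^ 2 * Real.log (M t))) * |x.2| := by
        rw [Prod.norm_def]
        simp only [norm_zero, Real.norm_eq_abs]
        rw [max_eq_right (abs_nonneg _), abs_mul, abs_of_pos hE]
      rw [hnorm]
      have hEle : D t / D s * (M s / M t) ^ b *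
          Real.exp (α * Real.sin s ^ 2 * Real.log (M s) -
            α * Real.sin t ^ 2 * Real.log (M t)) ≤
          2 * (M t / M s) ^ (-b) * M t ^ α := by
        rw [hflip s t]
        calc D t / D s * (M t / M s) ^ (-b) *
            Real.exp (α * Real.sin s ^ 2 * Real.log (M s) -
              α * Real.sin t ^ 2 * Real.log (M t))
            ≤ 2 * (M t / M s) ^ (-b) *
              Real.exp (α * Real.sin s ^ 2 * Real.log (M s) -
                α * Real.sin t ^ 2 * Real.log (M t)) :=
              mul_le_mul_of_nonneg_right
                (mul_le_mul_of_nonneg_right (hDdiv t s ht hs) hRb) (Real.exp_pos _).le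
          _ ≤ 2 * (M t / M s) ^ (-b) * M s ^ α :=
              mul_le_mul_of_nonneg_left (hexp_bound s t hs hst)
                (mul_nonneg (by norm_num) hRb)
          _ ≤ 2 * (M t / M s) ^ (-b) * M t ^ α :=
              mul_le_mul_of_nonneg_left
                (Real.rpow_le_rpow (hMpos s).le (hMmono s t hs hst) hα)
                (mul_nonneg (by norm_num) hRb)
      have hx2 : |x.2| ≤ ‖x‖ := by
        rw [← Real.norm_eq_abs]; exact norm_snd_le x
      exact mul_le_mul hEle hx2 (abs_nonneg _)
        (mul_nonneg (mul_nonneg (by norm_num) hRb) hMtα)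
end
end

section
/- Let p ≥ 1 and let μ : [0,∞) → [1,∞) be a differentiable growth rate. If the evolution operator U : Δ → B(X) has a nonuniform μ-dichotomy with projection valued function P (with constants a,b > 0, ε ≥ 0, N₁,N₂ ≥ 1), then for every 0 < γ < min{a,b} and every H ∈ H^μ_{γ,p}(P) there exists a function L : [0,∞) × X → ℝ such that for all t ≥ s ≥ 0 and x ∈ X: (i) L(t, U(t,s)x) + ∫_s^t ‖H(τ)U(τ,s)x‖^p dτ ≤ L(s,x); (ii) L(t,P(t)x) ≥ 0 and L(t,Q(t)x) ≤ 0; (iii) μ(t)^{−pγ} L(t,P(t)x) − μ(t)^{pγ} L(t,Q(t)x) ≤ 2^{p−1} D μ(t)^{pε} ‖x‖^p, where D = N₁^p/(p(a−γ)) + N₂^p/(p(b−γ)). -/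
open Real MeasureTheory Filter

noncomputable section

variable {X : Type*} [NormedAddCommGroup X] [NormedSpace ℝ X]

section AuxLyap
open Set Topology

lemma two_rpow_ineq {x y p : ℝ} (hx : 0 ≤ x) (hy : 0 ≤ y) (hp : 1 ≤ p) :
    (x + y) ^ p ≤ 2 ^ (p - 1) * (x ^ p + y ^ p) := by
  have h := NNReal.rpow_add_le_mul_rpow_add_rpow x.toNNReal y.toNNReal hp
  have hx' : ((x.toNNReal : ℝ)) = x := Real.coe_toNNReal x hx
  have hy' : ((y.toNNReal : ℝ)) = y := Real.coe_toNNReal y hy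
  calc (x + y) ^ p = ((x.toNNReal + y.toNNReal : NNReal) : ℝ) ^ p := by
        push_cast [hx', hy']; ring_nf
    _ = (((x.toNNReal + y.toNNReal : NNReal) ^ p : NNReal) : ℝ) := by
        rw [NNReal.coe_rpow]
    _ ≤ (((2:NNReal) ^ (p-1) * (x.toNNReal ^ p + y.toNNReal ^ p) : NNReal) : ℝ) := by
        exact_mod_cast h
    _ = 2 ^ (p - 1) * (x ^ p + y ^ p) := by
        push_cast [hx', hy']; ring

lemma deriv_nonneg_of_monotoneOn {f : ℝ → ℝ} {t : ℝ} (ht : 0 ≤ t)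
    (hm : MonotoneOn f (Set.Ici 0)) (hd : DifferentiableAt ℝ f t) : 0 ≤ deriv f t := by
  have h1 : HasDerivWithinAt f (deriv f t) (Set.Ioi t) t :=
    hd.hasDerivAt.hasDerivWithinAt
  have h2 := hasDerivWithinAt_iff_tendsto_slope.1 h1
  have hset : Set.Ioi t \ {t} = Set.Ioi t := Set.diff_singleton_eq_self (by simp)
  rw [hset] at h2
  refine ge_of_tendsto h2 ?_
  filter_upwards [self_mem_nhdsWithin] with y hy
  have hy' : t < y := hy
  rw [slope_def_field]
  have : f t ≤ f y := hm ht (le_trans ht hy'.le) hy'.le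
  exact div_nonneg (by linarith) (by linarith)

lemma rpow_div_neg {u v e : ℝ} (hu : 0 < u) (hv : 0 < v) :
    (u / v) ^ (-e) = u ^ (-e) * v ^ e := by
  rw [Real.div_rpow hu.le hv.le, Real.rpow_neg hv.le, div_eq_mul_inv, inv_inv]

variable {μ : ℝ → ℝ}

lemma hasDerivAt_mu_rpow (hd : ∀ t, 0 ≤ t → DifferentiableAt ℝ μ t)
    (h1 : ∀ t, 0 ≤ t → 1 ≤ μ t) {c : ℝ} (hc : c ≠ 0) {τ : ℝ} (hτ : 0 ≤ τ) :
    HasDerivAt (fun u => μ u ^ c / c) (deriv μ τ * μ τ ^ (c - 1)) τ := by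
  have hμτ : μ τ ≠ 0 := by have := h1 τ hτ; positivity
  have h := ((hd τ hτ).hasDerivAt.rpow_const (p := c) (Or.inl hμτ)).div_const c
  have e : deriv μ τ * μ τ ^ (c - 1) = deriv μ τ * c * μ τ ^ (c - 1) / c := by
    rw [eq_div_iff hc]
    ring
  rw [e]
  exact h

lemma ftc_mu (hd : ∀ t, 0 ≤ t → DifferentiableAt ℝ μ t) (hm : MonotoneOn μ (Set.Ici 0))
    (h1 : ∀ t, 0 ≤ t → 1 ≤ μ t) {c : ℝ} (hc : c ≠ 0) {r t : ℝ} (hr : 0 ≤ r) (hrt : r ≤ t) :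
    IntervalIntegrable (fun τ => deriv μ τ * μ τ ^ (c - 1)) volume r t ∧
      ∫ τ in r..t, deriv μ τ * μ τ ^ (c - 1) = (μ t ^ c - μ r ^ c) / c := by
  have hpos : ∀ τ, 0 ≤ τ → 0 < μ τ := fun τ hτ => lt_of_lt_of_le one_pos (h1 τ hτ)
  have hder : ∀ x ∈ Set.uIcc r t, HasDerivAt (fun u => μ u ^ c / c)
      (deriv μ x * μ x ^ (c - 1)) x := by
    intro x hx
    rw [Set.uIcc_of_le hrt] at hx
    exact hasDerivAt_mu_rpow hd h1 hc (hr.trans hx.1)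
  have hint : IntervalIntegrable (fun τ => deriv μ τ * μ τ ^ (c - 1)) volume r t := by
    apply intervalIntegral.intervalIntegrable_deriv_of_nonneg
    · intro x hx; exact (hder x hx).continuousAt.continuousWithinAt
    · intro x hx
      rw [min_eq_left hrt, max_eq_right hrt] at hx
      exact hder x (by rw [Set.uIcc_of_le hrt]; exact ⟨hx.1.le, hx.2.le⟩)
    · intro x hx
      rw [min_eq_left hrt, max_eq_right hrt] at hx
      have hx0 : 0 ≤ x := hr.trans hx.1.le
      exact mul_nonneg (deriv_nonneg_of_monotoneOn hx0 hm (hd x hx0))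
        (Real.rpow_nonneg (hpos x hx0).le _)
  refine ⟨hint, ?_⟩
  have := intervalIntegral.integral_eq_sub_of_hasDerivAt hder hint
  rw [this]; ring

lemma tail_mu (hd : ∀ t, 0 ≤ t → DifferentiableAt ℝ μ t) (hm : MonotoneOn μ (Set.Ici 0))
    (h1 : ∀ t, 0 ≤ t → 1 ≤ μ t) (htop : Tendsto μ atTop atTop) {c : ℝ} (hc : c < 0)
    {s : ℝ} (hs : 0 ≤ s) :
    IntegrableOn (fun τ => deriv μ τ * μ τ ^ (c - 1)) (Set.Ioi s) ∧
      ∫ τ in Set.Ioi s, deriv μ τ * μ τ ^ (c - 1) = μ s ^ c / (-c) := by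
  have hc' : c ≠ 0 := ne_of_lt hc
  have hder : ∀ x ∈ Set.Ici s, HasDerivAt (fun u => μ u ^ c / c)
      (deriv μ x * μ x ^ (c - 1)) x := fun x hx => hasDerivAt_mu_rpow hd h1 hc' (hs.trans hx)
  have hnn : ∀ x ∈ Set.Ioi s, 0 ≤ deriv μ x * μ x ^ (c - 1) := by
    intro x hx
    have hx0 : 0 ≤ x := hs.trans hx.le
    have := h1 x hx0
    exact mul_nonneg (deriv_nonneg_of_monotoneOn hx0 hm (hd x hx0)) (Real.rpow_nonneg (by linarith) _)
  have h0 : Tendsto (fun x : ℝ => x ^ c) atTop (𝓝 0) := by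
    simpa [neg_neg] using tendsto_rpow_neg_atTop (by linarith : (0:ℝ) < -c)
  have hg : Tendsto (fun u => μ u ^ c / c) atTop (𝓝 0) := by
    simpa using (h0.comp htop).div_const c
  refine ⟨integrableOn_Ioi_deriv_of_nonneg' hder hnn hg, ?_⟩
  rw [integral_Ioi_of_hasDerivAt_of_nonneg' hder hnn hg]
  rw [zero_sub, div_neg]

lemma intervalIntegrable_deriv_mul (hd : ∀ t, 0 ≤ t → DifferentiableAt ℝ μ t)
    (hm : MonotoneOn μ (Set.Ici 0)) {ρ : ℝ → ℝ} {r t : ℝ} (hr : 0 ≤ r) (hrt : r ≤ t)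
    (hρ : ContinuousOn ρ (Set.Icc r t)) :
    IntervalIntegrable (fun τ => deriv μ τ * ρ τ) volume r t := by
  obtain ⟨M, hM⟩ := (isCompact_Icc).exists_bound_of_continuousOn hρ
  have hμcont : ContinuousOn μ (Set.Icc r t) := fun x hx =>
    (hd x (hr.trans hx.1)).continuousAt.continuousWithinAt
  have hμ'int : IntegrableOn (deriv μ) (Set.Ioc r t) := by
    apply intervalIntegral.integrableOn_deriv_of_nonneg hμcont
    · intro x hx; exact (hd x (hr.trans hx.1.le)).hasDerivAt
    · intro x hx; exact deriv_nonneg_of_monotoneOn (hr.trans hx.1.le) hm (hd x (hr.trans hx.1.le))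
  rw [intervalIntegrable_iff_integrableOn_Ioc_of_le hrt]
  refine Integrable.mono' (hμ'int.const_mul M) ?_ ?_
  · exact ((measurable_deriv μ).aestronglyMeasurable.restrict).mul
      ((hρ.mono Set.Ioc_subset_Icc_self).aestronglyMeasurable measurableSet_Ioc)
  · filter_upwards [ae_restrict_mem measurableSet_Ioc] with τ hτ
    have h0 : 0 ≤ deriv μ τ := deriv_nonneg_of_monotoneOn (hr.trans hτ.1.le) hm (hd τ (hr.trans hτ.1.le))
    have hMτ : |ρ τ| ≤ M := hM τ (Set.Ioc_subset_Icc_self hτ)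
    calc |deriv μ τ * ρ τ| = deriv μ τ * |ρ τ| := by rw [abs_mul, abs_of_nonneg h0]
      _ ≤ deriv μ τ * M := by
          exact mul_le_mul_of_nonneg_left hMτ h0
      _ = M * deriv μ τ := mul_comm _ _

end AuxLyap

open Set Topology

/-- Theorem 3.6: if `U` has a nonuniform μ-dichotomy with projection valued function `P`
(with constants `a, b, ε, N₁, N₂`), then for every `0 < γ < min{a,b}` and every
`H ∈ H^μ_{γ,p}(P)` there is a Lyapunov-type function `L : [0,∞) × X → ℝ` satisfying
(i) `L(t, U(t,s)x) + ∫_s^t ‖H(τ)U(τ,s)x‖^p dτ ≤ L(s,x)`,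
(ii) `L(t, P(t)x) ≥ 0` and `L(t, Q(t)x) ≤ 0`,
(iii) `μ(t)^{-pγ} L(t,P(t)x) - μ(t)^{pγ} L(t,Q(t)x) ≤ 2^{p-1} D μ(t)^{pε} ‖x‖^p`,
where `D = N₁^p/(p(a-γ)) + N₂^p/(p(b-γ))`. -/
theorem dichotomy_implies_lyapunov_function
    {X : Type*} [NormedAddCommGroup X] [NormedSpace ℝ X] [CompleteSpace X]
    (μ : ℝ → ℝ) (hgr : IsGrowthRate μ)
    (hdiff : ∀ t, 0 ≤ t → DifferentiableAt ℝ μ t)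
    (p : ℝ) (hp : 1 ≤ p)
    (U V : ℝ → ℝ → X →L[ℝ] X) (P : ℝ → X →L[ℝ] X)
    (hU : IsEvolutionOperator U) (hP : IsProjectionValued P)
    (hC : CompatibleProjection U V P)
    (a b ε N₁ N₂ : ℝ) (ha : 0 < a) (hb : 0 < b) (hε : 0 ≤ ε)
    (hN₁ : 1 ≤ N₁) (hN₂ : 1 ≤ N₂)
    (hdich₁ : ∀ s t, 0 ≤ s → s ≤ t →
      ‖(U t s).comp (P s)‖ ≤ N₁ * (μ t / μ s) ^ (-a) * μ s ^ ε)
    (hdich₂ : ∀ s t, 0 ≤ s → s ≤ t →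
      ‖(V s t).comp (1 - P t)‖ ≤ N₂ * (μ t / μ s) ^ (-b) * μ t ^ ε)
    (γ : ℝ) (hγ0 : 0 < γ) (hγ : γ < min a b)
    (H : ℝ → X →L[ℝ] X) (hH : MemHClass μ P γ p H) :
    ∃ L : ℝ → X → ℝ,
      (∀ s t, 0 ≤ s → s ≤ t → ∀ x : X,
        L t (U t s x) + ∫ τ in s..t, ‖H τ (U τ s x)‖ ^ p ≤ L s x) ∧
      (∀ t, 0 ≤ t → ∀ x : X, 0 ≤ L t (P t x) ∧ L t ((1 - P t) x) ≤ 0) ∧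
      (∀ t, 0 ≤ t → ∀ x : X,
        μ t ^ (-(p * γ)) * L t (P t x) - μ t ^ (p * γ) * L t ((1 - P t) x) ≤
          (2 : ℝ) ^ (p - 1) * (N₁ ^ p / (p * (a - γ)) + N₂ ^ p / (p * (b - γ))) *
            μ t ^ (p * ε) * ‖x‖ ^ p) := by
  classical
  obtain ⟨hμ1, hμmono, hμ0, hμtop⟩ := hgr
  obtain ⟨hU1, hU2, hU3⟩ := hU
  obtain ⟨hP1, hPcont⟩ := hP
  obtain ⟨hC1, hC2, hC3, hC4⟩ := hC
  obtain ⟨hHcont, hHb⟩ := hH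
  have hp0 : (0:ℝ) < p := lt_of_lt_of_le one_pos hp
  have hpne : p ≠ 0 := ne_of_gt hp0
  have hγa : γ < a := lt_of_lt_of_le hγ (min_le_left a b)
  have hγb : γ < b := lt_of_lt_of_le hγ (min_le_right a b)
  have hN₁0 : (0:ℝ) ≤ N₁ := le_trans zero_le_one hN₁
  have hN₂0 : (0:ℝ) ≤ N₂ := le_trans zero_le_one hN₂
  have hμpos : ∀ t, 0 ≤ t → 0 < μ t := fun t ht => lt_of_lt_of_le one_pos (hμ1 t ht)
  have hμ'nn : ∀ t, 0 ≤ t → 0 ≤ deriv μ t := fun t ht =>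
    deriv_nonneg_of_monotoneOn ht hμmono (hdiff t ht)
  have h2p : (0:ℝ) ≤ 2 ^ (p-1) := Real.rpow_nonneg (by norm_num) _
  have hc₁ : p * (γ - a) < 0 := mul_neg_of_pos_of_neg hp0 (by linarith)
  have hc₂ : (0:ℝ) < p * (b - γ) := mul_pos hp0 (by linarith)
  have hca : (0:ℝ) < p * (a - γ) := mul_pos hp0 (by linarith)
  -- operator identities
  have hUU : ∀ s τ t : ℝ, 0 ≤ s → s ≤ τ → τ ≤ t → ∀ x : X, U t τ (U τ s x) = U t s x := by
    intro s τ t h1 h2 h3 x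
    rw [← ContinuousLinearMap.comp_apply, hU2 s τ t h1 h2 h3]
  have hPU : ∀ s τ : ℝ, 0 ≤ s → s ≤ τ → ∀ x : X, P τ (U τ s x) = U τ s (P s x) := by
    intro s τ h1 h2 x
    rw [← ContinuousLinearMap.comp_apply, hC1 s τ h1 h2, ContinuousLinearMap.comp_apply]
  have hQU : ∀ s τ : ℝ, 0 ≤ s → s ≤ τ → ∀ x : X,
      (1 - P τ) (U τ s x) = U τ s ((1 - P s) x) := by
    intro s τ h1 h2 x
    simp only [ContinuousLinearMap.sub_apply, ContinuousLinearMap.one_apply, map_sub,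
      hPU s τ h1 h2 x]
  have hPP : ∀ t : ℝ, 0 ≤ t → ∀ x : X, P t (P t x) = P t x := by
    intro t ht x; rw [← ContinuousLinearMap.comp_apply, hP1 t ht]
  have hPQ : ∀ t : ℝ, 0 ≤ t → ∀ x : X, P t ((1 - P t) x) = 0 := by
    intro t ht x
    simp [ContinuousLinearMap.sub_apply, ContinuousLinearMap.one_apply, map_sub, hPP t ht x]
  have hQP : ∀ t : ℝ, 0 ≤ t → ∀ x : X, (1 - P t) (P t x) = 0 := by
    intro t ht x
    simp [ContinuousLinearMap.sub_apply, ContinuousLinearMap.one_apply, hPP t ht x]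
  have hQQ : ∀ t : ℝ, 0 ≤ t → ∀ x : X, (1 - P t) ((1 - P t) x) = (1 - P t) x := by
    intro t ht x
    calc (1 - P t) ((1 - P t) x) = (1 - P t) x - P t ((1 - P t) x) := by
          simp [ContinuousLinearMap.sub_apply, ContinuousLinearMap.one_apply]
      _ = (1 - P t) x := by rw [hPQ t ht x, sub_zero]
  have hVcomp : ∀ r τ t' : ℝ, 0 ≤ r → r ≤ τ → τ ≤ t' → ∀ v : X,
      U τ r (V r t' ((1 - P t') v)) = V τ t' ((1 - P t') v) := by
    intro r τ t' hr hrτ hτt v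
    have hrt : r ≤ t' := hrτ.trans hτt
    have hw1 : (1 - P r) (V r t' ((1 - P t') v)) = V r t' ((1 - P t') v) := hC2 r t' hr hrt v
    have hw2 : U t' r (V r t' ((1 - P t') v)) = (1 - P t') v := hC3 r t' hr hrt v
    have hz1 : (1 - P τ) (U τ r (V r t' ((1 - P t') v))) = U τ r (V r t' ((1 - P t') v)) := by
      rw [hQU r τ hr hrτ, hw1]
    have hz2 : U t' τ (U τ r (V r t' ((1 - P t') v))) = (1 - P t') v := by
      rw [hUU r τ t' hr hrτ hτt, hw2]
    have h4 := hC4 τ t' (hr.trans hrτ) hτt (U τ r (V r t' ((1 - P t') v)))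
    rw [hz1, hz2] at h4
    exact h4.symm
  have hVtrans : ∀ r s t : ℝ, 0 ≤ r → r ≤ s → s ≤ t → ∀ x : X,
      V r t ((1 - P t) (U t s x)) = V r s ((1 - P s) x) := by
    intro r s t hr hrs hst x
    have hw1 : (1 - P r) (V r s ((1 - P s) x)) = V r s ((1 - P s) x) := hC2 r s hr hrs x
    have hw2 : U s r (V r s ((1 - P s) x)) = (1 - P s) x := hC3 r s hr hrs x
    have hUt : U t r (V r s ((1 - P s) x)) = (1 - P t) (U t s x) := by
      rw [← hUU r s t hr hrs hst, hw2, ← hQU s t (hr.trans hrs) hst]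
    have h4 := hC4 r t hr (hrs.trans hst) (V r s ((1 - P s) x))
    rw [hw1, hUt] at h4
    exact h4
  have hVss : ∀ s : ℝ, 0 ≤ s → ∀ x : X, V s s ((1 - P s) x) = (1 - P s) x := by
    intro s hs x
    have h := hC3 s s hs le_rfl x
    rwa [hU1 s hs, ContinuousLinearMap.one_apply] at h
  -- continuity of trajectories
  have hUcont : ∀ s : ℝ, 0 ≤ s → ∀ v : X, ContinuousOn (fun τ => U τ s v) (Set.Ici s) := by
    intro s hs v
    exact (hU3 v).comp ((continuous_id.prodMk continuous_const).continuousOn)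
      (fun τ hτ => ⟨hs, hτ⟩)
  have hμrpowcont : ∀ t e : ℝ, 0 ≤ t → ContinuousOn (fun τ => μ τ ^ e) (Set.Ici t) := by
    intro t e ht
    apply ContinuousOn.rpow_const
    · intro τ hτ; exact (hdiff τ (ht.trans hτ)).continuousAt.continuousWithinAt
    · intro τ hτ; exact Or.inl (ne_of_gt (hμpos τ (ht.trans hτ)))
  -- norm bounds from the dichotomy
  have hnormU : ∀ t τ : ℝ, 0 ≤ t → t ≤ τ → ∀ x : X,
      ‖U τ t (P t x)‖ ^ p ≤ (N₁ * μ t ^ ε * ‖x‖) ^ p * (μ τ ^ (-(a*p)) * μ t ^ (a*p)) := by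
    intro t τ ht htτ x
    have hb1 : ‖U τ t (P t x)‖ ≤ N₁ * (μ τ / μ t) ^ (-a) * μ t ^ ε * ‖x‖ := by
      calc ‖U τ t (P t x)‖ = ‖((U τ t).comp (P t)) x‖ := rfl
        _ ≤ ‖(U τ t).comp (P t)‖ * ‖x‖ := ContinuousLinearMap.le_opNorm _ _
        _ ≤ N₁ * (μ τ / μ t) ^ (-a) * μ t ^ ε * ‖x‖ :=
            mul_le_mul_of_nonneg_right (hdich₁ t τ ht htτ) (norm_nonneg _)
    have h2 := Real.rpow_le_rpow (norm_nonneg _) hb1 hp0.le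
    have hdivnn : (0:ℝ) ≤ μ τ / μ t := div_nonneg (hμpos τ (ht.trans htτ)).le (hμpos t ht).le
    calc ‖U τ t (P t x)‖ ^ p ≤ (N₁ * (μ τ / μ t) ^ (-a) * μ t ^ ε * ‖x‖) ^ p := h2
      _ = ((N₁ * μ t ^ ε * ‖x‖) * (μ τ / μ t) ^ (-a)) ^ p := by ring_nf
      _ = (N₁ * μ t ^ ε * ‖x‖) ^ p * ((μ τ / μ t) ^ (-a)) ^ p := by
          rw [Real.mul_rpow (mul_nonneg (mul_nonneg hN₁0
            (Real.rpow_nonneg (hμpos t ht).le _)) (norm_nonneg _)) (Real.rpow_nonneg hdivnn _)]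
      _ = (N₁ * μ t ^ ε * ‖x‖) ^ p * (μ τ ^ (-(a*p)) * μ t ^ (a*p)) := by
          rw [← Real.rpow_mul hdivnn, show (-a) * p = -(a*p) by ring,
            rpow_div_neg (hμpos τ (ht.trans htτ)) (hμpos t ht)]
  have hnormV : ∀ τ t : ℝ, 0 ≤ τ → τ ≤ t → ∀ x : X,
      ‖V τ t ((1 - P t) x)‖ ^ p ≤ (N₂ * μ t ^ ε * ‖x‖) ^ p * (μ t ^ (-(b*p)) * μ τ ^ (b*p)) := by
    intro τ t hτ hτt x
    have hb1 : ‖V τ t ((1 - P t) x)‖ ≤ N₂ * (μ t / μ τ) ^ (-b) * μ t ^ ε * ‖x‖ := by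
      calc ‖V τ t ((1 - P t) x)‖ = ‖((V τ t).comp (1 - P t)) x‖ := rfl
        _ ≤ ‖(V τ t).comp (1 - P t)‖ * ‖x‖ := ContinuousLinearMap.le_opNorm _ _
        _ ≤ N₂ * (μ t / μ τ) ^ (-b) * μ t ^ ε * ‖x‖ :=
            mul_le_mul_of_nonneg_right (hdich₂ τ t hτ hτt) (norm_nonneg _)
    have h2 := Real.rpow_le_rpow (norm_nonneg _) hb1 hp0.le
    have hdivnn : (0:ℝ) ≤ μ t / μ τ := div_nonneg (hμpos t (hτ.trans hτt)).le (hμpos τ hτ).le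
    calc ‖V τ t ((1 - P t) x)‖ ^ p ≤ (N₂ * (μ t / μ τ) ^ (-b) * μ t ^ ε * ‖x‖) ^ p := h2
      _ = ((N₂ * μ t ^ ε * ‖x‖) * (μ t / μ τ) ^ (-b)) ^ p := by ring_nf
      _ = (N₂ * μ t ^ ε * ‖x‖) ^ p * ((μ t / μ τ) ^ (-b)) ^ p := by
          rw [Real.mul_rpow (mul_nonneg (mul_nonneg hN₂0
            (Real.rpow_nonneg (hμpos t (hτ.trans hτt)).le _)) (norm_nonneg _)) (Real.rpow_nonneg hdivnn _)]
      _ = (N₂ * μ t ^ ε * ‖x‖) ^ p * (μ t ^ (-(b*p)) * μ τ ^ (b*p)) := by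
          rw [← Real.rpow_mul hdivnn, show (-b) * p = -(b*p) by ring,
            rpow_div_neg (hμpos t (hτ.trans hτt)) (hμpos τ hτ)]
  -- the Lyapunov function
  set AInt : ℝ → X → ℝ → ℝ :=
    fun t x τ => deriv μ τ * (2 ^ (p-1) * μ τ ^ (p*γ - 1) * ‖U τ t (P t x)‖ ^ p) with hAIntdef
  set A : ℝ → X → ℝ := fun t x => ∫ τ in Set.Ioi t, AInt t x τ with hAdef
  set FInt : ℝ → ℝ → X → ℝ → ℝ :=
    fun r t x τ => deriv μ τ *
      (2 ^ (p-1) * μ τ ^ (-(p*γ) - 1) * ‖U τ r (V r t ((1 - P t) x))‖ ^ p) with hFIntdef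
  set F : ℝ → X → ℝ → ℝ := fun t x r => ∫ τ in r..t, FInt r t x τ with hFdef
  set B : ℝ → X → ℝ := fun t x => sSup (F t x '' Set.Icc 0 t) with hBdef
  -- properties of A
  have hAInt_nonneg : ∀ t (x : X), ∀ τ, 0 ≤ t → τ ∈ Set.Ioi t → 0 ≤ AInt t x τ := by
    intro t x τ ht hτ
    have hτ0 : 0 ≤ τ := ht.trans (le_of_lt hτ)
    exact mul_nonneg (hμ'nn τ hτ0) (mul_nonneg (mul_nonneg h2p
      (Real.rpow_nonneg (hμpos τ hτ0).le _)) (Real.rpow_nonneg (norm_nonneg _) _))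
  have hAInt_meas : ∀ t : ℝ, 0 ≤ t → ∀ x : X,
      AEStronglyMeasurable (AInt t x) (volume.restrict (Set.Ioi t)) := by
    intro t ht x
    apply ((measurable_deriv μ).aestronglyMeasurable.restrict).mul
    have hcont : ContinuousOn
        (fun τ => 2 ^ (p-1) * μ τ ^ (p*γ - 1) * ‖U τ t (P t x)‖ ^ p) (Set.Ici t) := by
      refine ContinuousOn.mul (ContinuousOn.mul continuousOn_const (hμrpowcont t _ ht)) ?_
      exact ((hUcont t ht (P t x)).norm).rpow_const (fun τ hτ => Or.inr hp0.le)
    exact (hcont.mono Set.Ioi_subset_Ici_self).aestronglyMeasurable measurableSet_Ioi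
  have hAInt_bound : ∀ t, 0 ≤ t → ∀ x : X, ∀ τ ∈ Set.Ioi t,
      AInt t x τ ≤ (2 ^ (p-1) * (N₁ * μ t ^ ε * ‖x‖) ^ p * μ t ^ (a*p)) *
        (deriv μ τ * μ τ ^ (p*(γ-a) - 1)) := by
    intro t ht x τ hτ
    have hτ0 : 0 ≤ τ := ht.trans (le_of_lt hτ)
    have h := hnormU t τ ht (le_of_lt hτ) x
    calc AInt t x τ
        ≤ deriv μ τ * (2 ^ (p-1) * μ τ ^ (p*γ - 1) *
            ((N₁ * μ t ^ ε * ‖x‖) ^ p * (μ τ ^ (-(a*p)) * μ t ^ (a*p)))) := by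
          apply mul_le_mul_of_nonneg_left _ (hμ'nn τ hτ0)
          exact mul_le_mul_of_nonneg_left h (mul_nonneg h2p (Real.rpow_nonneg (hμpos τ hτ0).le _))
      _ = (2 ^ (p-1) * (N₁ * μ t ^ ε * ‖x‖) ^ p * μ t ^ (a*p)) *
            (deriv μ τ * (μ τ ^ (p*γ - 1) * μ τ ^ (-(a*p)))) := by ring
      _ = (2 ^ (p-1) * (N₁ * μ t ^ ε * ‖x‖) ^ p * μ t ^ (a*p)) *
            (deriv μ τ * μ τ ^ (p*(γ-a) - 1)) := by
          rw [← Real.rpow_add (hμpos τ hτ0), show p*γ - 1 + -(a*p) = p*(γ-a) - 1 from by ring]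
  have hAInt_integrable : ∀ t, 0 ≤ t → ∀ x : X, IntegrableOn (AInt t x) (Set.Ioi t) := by
    intro t ht x
    have htail := (tail_mu hdiff hμmono hμ1 hμtop hc₁ ht).1
    refine Integrable.mono'
      (htail.const_mul (2 ^ (p-1) * (N₁ * μ t ^ ε * ‖x‖) ^ p * μ t ^ (a*p)))
      (hAInt_meas t ht x) ?_
    filter_upwards [ae_restrict_mem measurableSet_Ioi] with τ hτ
    rw [Real.norm_eq_abs, abs_of_nonneg (hAInt_nonneg t x τ ht hτ)]
    exact hAInt_bound t ht x τ hτ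
  have hA_nonneg : ∀ t, 0 ≤ t → ∀ x : X, 0 ≤ A t x := fun t ht x =>
    setIntegral_nonneg measurableSet_Ioi (fun τ hτ => hAInt_nonneg t x τ ht hτ)
  have hA_le : ∀ t, 0 ≤ t → ∀ x : X, A t x ≤
      (2 ^ (p-1) * (N₁ * μ t ^ ε * ‖x‖) ^ p * μ t ^ (a*p)) *
        (μ t ^ (p*(γ-a)) / (p*(a-γ))) := by
    intro t ht x
    have htail := tail_mu hdiff hμmono hμ1 hμtop hc₁ ht
    have hmono := setIntegral_mono_on (hAInt_integrable t ht x)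
      (htail.1.const_mul (2 ^ (p-1) * (N₁ * μ t ^ ε * ‖x‖) ^ p * μ t ^ (a*p)))
      measurableSet_Ioi (hAInt_bound t ht x)
    calc A t x ≤ ∫ τ in Set.Ioi t, (2 ^ (p-1) * (N₁ * μ t ^ ε * ‖x‖) ^ p * μ t ^ (a*p)) *
          (deriv μ τ * μ τ ^ (p*(γ-a) - 1)) := hmono
      _ = (2 ^ (p-1) * (N₁ * μ t ^ ε * ‖x‖) ^ p * μ t ^ (a*p)) *
          (μ t ^ (p*(γ-a)) / (-(p*(γ-a)))) := by
          rw [MeasureTheory.integral_const_mul, htail.2]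
      _ = (2 ^ (p-1) * (N₁ * μ t ^ ε * ‖x‖) ^ p * μ t ^ (a*p)) *
          (μ t ^ (p*(γ-a)) / (p*(a-γ))) := by
          rw [show -(p*(γ-a)) = p*(a-γ) from by ring]
  -- properties of F and B
  have hFInt_cont : ∀ r t : ℝ, 0 ≤ r → ∀ x : X, ContinuousOn
      (fun τ => 2 ^ (p-1) * μ τ ^ (-(p*γ) - 1) * ‖U τ r (V r t ((1 - P t) x))‖ ^ p)
      (Set.Ici r) := by
    intro r t hr x
    refine ContinuousOn.mul (ContinuousOn.mul continuousOn_const (hμrpowcont r _ hr)) ?_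
    exact ((hUcont r hr _).norm).rpow_const (fun τ hτ => Or.inr hp0.le)
  have hF_II : ∀ r u v t' : ℝ, ∀ x : X, 0 ≤ r → r ≤ u → u ≤ v →
      IntervalIntegrable (FInt r t' x) volume u v := by
    intro r u v t' x hr hru huv
    refine intervalIntegrable_deriv_mul hdiff hμmono (hr.trans hru) huv
      ((hFInt_cont r t' hr x).mono ?_)
    exact fun τ hτ => hru.trans hτ.1
  have hFInt_nonneg : ∀ r t : ℝ, ∀ x : X, ∀ τ, 0 ≤ r → r ≤ τ → 0 ≤ FInt r t x τ := by
    intro r t x τ hr hrτ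
    have hτ0 : 0 ≤ τ := hr.trans hrτ
    exact mul_nonneg (hμ'nn τ hτ0) (mul_nonneg (mul_nonneg h2p
      (Real.rpow_nonneg (hμpos τ hτ0).le _)) (Real.rpow_nonneg (norm_nonneg _) _))
  have hF_le : ∀ t, 0 ≤ t → ∀ x : X, ∀ r ∈ Set.Icc 0 t, F t x r ≤
      (2 ^ (p-1) * (N₂ * μ t ^ ε * ‖x‖) ^ p * μ t ^ (-(b*p))) *
        (μ t ^ (p*(b-γ)) / (p*(b-γ))) := by
    intro t ht x r hr
    obtain ⟨hr0, hrt⟩ := hr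
    have hftc := ftc_mu hdiff hμmono hμ1 (ne_of_gt hc₂) hr0 hrt
    have hC0 : 0 ≤ 2 ^ (p-1) * (N₂ * μ t ^ ε * ‖x‖) ^ p * μ t ^ (-(b*p)) :=
      mul_nonneg (mul_nonneg h2p (Real.rpow_nonneg (mul_nonneg (mul_nonneg hN₂0
        (Real.rpow_nonneg (hμpos t ht).le _)) (norm_nonneg _)) _))
        (Real.rpow_nonneg (hμpos t ht).le _)
    have hptw : ∀ τ ∈ Set.Icc r t, FInt r t x τ ≤
        (2 ^ (p-1) * (N₂ * μ t ^ ε * ‖x‖) ^ p * μ t ^ (-(b*p))) *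
          (deriv μ τ * μ τ ^ (p*(b-γ) - 1)) := by
      intro τ hτ
      have hτ0 : 0 ≤ τ := hr0.trans hτ.1
      have hv := hVcomp r τ t hr0 hτ.1 hτ.2 x
      have hnv := hnormV τ t hτ0 hτ.2 x
      calc FInt r t x τ
          = deriv μ τ * (2 ^ (p-1) * μ τ ^ (-(p*γ) - 1) * ‖V τ t ((1 - P t) x)‖ ^ p) := by
            simp only [hFIntdef, hv]
        _ ≤ deriv μ τ * (2 ^ (p-1) * μ τ ^ (-(p*γ) - 1) *
              ((N₂ * μ t ^ ε * ‖x‖) ^ p * (μ t ^ (-(b*p)) * μ τ ^ (b*p)))) := by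
            apply mul_le_mul_of_nonneg_left _ (hμ'nn τ hτ0)
            exact mul_le_mul_of_nonneg_left hnv
              (mul_nonneg h2p (Real.rpow_nonneg (hμpos τ hτ0).le _))
        _ = (2 ^ (p-1) * (N₂ * μ t ^ ε * ‖x‖) ^ p * μ t ^ (-(b*p))) *
              (deriv μ τ * (μ τ ^ (-(p*γ) - 1) * μ τ ^ (b*p))) := by ring
        _ = (2 ^ (p-1) * (N₂ * μ t ^ ε * ‖x‖) ^ p * μ t ^ (-(b*p))) *
              (deriv μ τ * μ τ ^ (p*(b-γ) - 1)) := by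
            rw [← Real.rpow_add (hμpos τ hτ0),
              show -(p*γ) - 1 + b*p = p*(b-γ) - 1 from by ring]
    have hmono := intervalIntegral.integral_mono_on hrt (hF_II r r t t x hr0 le_rfl hrt)
      (hftc.1.const_mul (2 ^ (p-1) * (N₂ * μ t ^ ε * ‖x‖) ^ p * μ t ^ (-(b*p)))) hptw
    calc F t x r ≤ ∫ τ in r..t, (2 ^ (p-1) * (N₂ * μ t ^ ε * ‖x‖) ^ p * μ t ^ (-(b*p))) *
          (deriv μ τ * μ τ ^ (p*(b-γ) - 1)) := hmono
      _ = (2 ^ (p-1) * (N₂ * μ t ^ ε * ‖x‖) ^ p * μ t ^ (-(b*p))) *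
          ((μ t ^ (p*(b-γ)) - μ r ^ (p*(b-γ))) / (p*(b-γ))) := by
          rw [intervalIntegral.integral_const_mul, hftc.2]
      _ ≤ (2 ^ (p-1) * (N₂ * μ t ^ ε * ‖x‖) ^ p * μ t ^ (-(b*p))) *
          (μ t ^ (p*(b-γ)) / (p*(b-γ))) := by
          exact mul_le_mul_of_nonneg_left ((div_le_div_iff_of_pos_right hc₂).2
            (sub_le_self _ (Real.rpow_nonneg (hμpos r hr0).le _))) hC0
  have hBddAbove : ∀ t, 0 ≤ t → ∀ x : X, BddAbove (F t x '' Set.Icc 0 t) := by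
    intro t ht x
    exact ⟨_, by rintro y ⟨r, hr, rfl⟩; exact hF_le t ht x r hr⟩
  have hBne : ∀ (t : ℝ) (x : X), 0 ≤ t → (F t x '' Set.Icc 0 t).Nonempty :=
    fun t x ht => ⟨F t x t, Set.mem_image_of_mem _ ⟨ht, le_rfl⟩⟩
  have hB_nonneg : ∀ t, 0 ≤ t → ∀ x : X, 0 ≤ B t x := by
    intro t ht x
    have h0 : F t x t = 0 := intervalIntegral.integral_same
    have hle := le_csSup (hBddAbove t ht x)
      (Set.mem_image_of_mem (F t x) (⟨ht, le_rfl⟩ : t ∈ Set.Icc 0 t))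
    rw [h0] at hle
    exact hle
  have hB_le : ∀ t, 0 ≤ t → ∀ x : X, B t x ≤
      (2 ^ (p-1) * (N₂ * μ t ^ ε * ‖x‖) ^ p * μ t ^ (-(b*p))) *
        (μ t ^ (p*(b-γ)) / (p*(b-γ))) := by
    intro t ht x
    exact csSup_le (hBne t x ht) (by rintro y ⟨r, hr, rfl⟩; exact hF_le t ht x r hr)
  -- behaviour on the ranges of the projections
  have hBproj : ∀ t, 0 ≤ t → ∀ x : X, B t (P t x) = 0 := by
    intro t ht x
    have himg : F t (P t x) '' Set.Icc 0 t = {0} := by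
      apply Set.eq_singleton_iff_nonempty_unique_mem.2
      refine ⟨hBne t (P t x) ht, ?_⟩
      rintro y ⟨r, hr, rfl⟩
      have hzero : FInt r t (P t x) = fun _ => (0:ℝ) := by
        funext τ
        simp only [hFIntdef]
        rw [hQP t ht x]
        simp [Real.zero_rpow hpne]
      rw [hFdef]
      simp only [hzero]
      exact intervalIntegral.integral_zero
    rw [hBdef]
    simp only [himg]
    exact csSup_singleton 0
  have hAproj : ∀ t, 0 ≤ t → ∀ x : X, A t ((1 - P t) x) = 0 := by
    intro t ht x
    have hzero : AInt t ((1 - P t) x) = fun _ => (0:ℝ) := by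
      funext τ
      simp only [hAIntdef]
      rw [hPQ t ht x]
      simp [Real.zero_rpow hpne]
    rw [hAdef]
    simp only [hzero]
    exact integral_zero _ _
  have hAP : ∀ t, 0 ≤ t → ∀ x : X, A t (P t x) = A t x := by
    intro t ht x
    have he : AInt t (P t x) = AInt t x := by
      funext τ
      simp only [hAIntdef]
      rw [hPP t ht x]
    simp only [hAdef, he]
  have hBQ : ∀ t, 0 ≤ t → ∀ x : X, B t ((1 - P t) x) = B t x := by
    intro t ht x
    have hFeq : F t ((1 - P t) x) = F t x := by
      funext r
      have he : FInt r t ((1 - P t) x) = FInt r t x := by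
        funext τ
        simp only [hFIntdef]
        rw [hQQ t ht x]
      simp only [hFdef, he]
    simp only [hBdef, hFeq]
  refine ⟨fun t x => A t x - B t x, ?_, ?_, ?_⟩
  · -- (i)
    intro s t hs hst x
    have ht0 : 0 ≤ t := hs.trans hst
    have hIh_II : IntervalIntegrable (AInt s x) volume s t := by
      rw [intervalIntegrable_iff_integrableOn_Ioc_of_le hst]
      exact (hAInt_integrable s hs x).mono_set Set.Ioc_subset_Ioi_self
    have hAsplit : A s x = (∫ τ in s..t, AInt s x τ) + A t (U t s x) := by
      have hEq : Set.EqOn (AInt t (U t s x)) (AInt s x) (Set.Ioi t) := by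
        intro τ hτ
        simp only [hAIntdef]
        rw [hPU s t hs hst x, hUU s t τ hs hst (le_of_lt hτ)]
      have hi1 : IntegrableOn (AInt s x) (Set.Ioc s t) :=
        (hAInt_integrable s hs x).mono_set Set.Ioc_subset_Ioi_self
      have hi2 : IntegrableOn (AInt s x) (Set.Ioi t) :=
        (hAInt_integrable s hs x).mono_set (Set.Ioi_subset_Ioi hst)
      have hdisj : Disjoint (Set.Ioc s t) (Set.Ioi t) :=
        Set.disjoint_left.2 (fun τ h1 h2 => absurd h1.2 (not_le.2 h2))
      calc A s x = ∫ τ in Set.Ioc s t ∪ Set.Ioi t, AInt s x τ := by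
            simp only [hAdef]
            rw [Set.Ioc_union_Ioi_eq_Ioi hst]
        _ = (∫ τ in Set.Ioc s t, AInt s x τ) + ∫ τ in Set.Ioi t, AInt s x τ :=
            setIntegral_union hdisj measurableSet_Ioi hi1 hi2
        _ = (∫ τ in s..t, AInt s x τ) + A t (U t s x) := by
            rw [intervalIntegral.integral_of_le hst]
            congr 1
            simp only [hAdef]
            exact (setIntegral_congr_fun measurableSet_Ioi hEq).symm
    set GInt : ℝ → ℝ := fun τ => deriv μ τ *
      (2 ^ (p-1) * μ τ ^ (-(p*γ) - 1) * ‖U τ s ((1 - P s) x)‖ ^ p) with hGIntdef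
    have hGInt_II : IntervalIntegrable GInt volume s t := by
      refine intervalIntegrable_deriv_mul hdiff hμmono hs hst ?_
      refine ContinuousOn.mul (ContinuousOn.mul continuousOn_const
        ((hμrpowcont s _ hs).mono Set.Icc_subset_Ici_self)) ?_
      exact ((((hUcont s hs _).norm).rpow_const (fun τ hτ => Or.inr hp0.le)).mono
        Set.Icc_subset_Ici_self)
    have hIg_nonneg : 0 ≤ ∫ τ in s..t, GInt τ := by
      refine intervalIntegral.integral_nonneg hst (fun τ hτ => ?_)
      have hτ0 : 0 ≤ τ := hs.trans hτ.1
      exact mul_nonneg (hμ'nn τ hτ0) (mul_nonneg (mul_nonneg h2p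
        (Real.rpow_nonneg (hμpos τ hτ0).le _)) (Real.rpow_nonneg (norm_nonneg _) _))
    have hIh_nonneg : 0 ≤ ∫ τ in s..t, AInt s x τ := by
      refine intervalIntegral.integral_nonneg hst (fun τ hτ => ?_)
      have hτ0 : 0 ≤ τ := hs.trans hτ.1
      exact mul_nonneg (hμ'nn τ hτ0) (mul_nonneg (mul_nonneg h2p
        (Real.rpow_nonneg (hμpos τ hτ0).le _)) (Real.rpow_nonneg (norm_nonneg _) _))
    have hBmono : B s x + (∫ τ in s..t, GInt τ) ≤ B t (U t s x) := by
      have hkey : ∀ r, r ∈ Set.Icc 0 s →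
          F t (U t s x) r = F s x r + ∫ τ in s..t, GInt τ := by
        intro r hr
        obtain ⟨hr0, hrs⟩ := hr
        have hrt : r ≤ t := hrs.trans hst
        have hveq : V r t ((1 - P t) (U t s x)) = V r s ((1 - P s) x) :=
          hVtrans r s t hr0 hrs hst x
        have hFeq1 : FInt r t (U t s x) = FInt r s x := by
          funext τ
          simp only [hFIntdef]
          rw [hveq]
        have hsplit : (∫ τ in r..s, FInt r t (U t s x) τ) +
            (∫ τ in s..t, FInt r t (U t s x) τ) = ∫ τ in r..t, FInt r t (U t s x) τ :=
          intervalIntegral.integral_add_adjacent_intervals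
            (hF_II r r s t (U t s x) hr0 le_rfl hrs) (hF_II r s t t (U t s x) hr0 hrs hst)
        have hFeq2 : Set.EqOn (fun τ => FInt r t (U t s x) τ) GInt (Set.uIcc s t) := by
          intro τ hτ
          rw [Set.uIcc_of_le hst] at hτ
          simp only [hFIntdef, hGIntdef]
          rw [hveq, ← hUU r s τ hr0 hrs hτ.1, hC3 r s hr0 hrs x]
        calc F t (U t s x) r = ∫ τ in r..t, FInt r t (U t s x) τ := by simp only [hFdef]
          _ = (∫ τ in r..s, FInt r t (U t s x) τ) + ∫ τ in s..t, FInt r t (U t s x) τ :=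
              hsplit.symm
          _ = F s x r + ∫ τ in s..t, GInt τ := by
              congr 1
              · simp only [hFdef, hFeq1]
              · exact intervalIntegral.integral_congr hFeq2
      have hsup : B s x ≤ B t (U t s x) - ∫ τ in s..t, GInt τ := by
        apply csSup_le (hBne s x hs)
        rintro y ⟨r, hr, rfl⟩
        have hmem : r ∈ Set.Icc 0 t := ⟨hr.1, hr.2.trans hst⟩
        have hle := le_csSup (hBddAbove t ht0 (U t s x))
          (Set.mem_image_of_mem (F t (U t s x)) hmem)
        rw [hkey r hr] at hle
        linarith
      linarith
    have hptw : ∀ τ ∈ Set.Icc s t, ‖H τ (U τ s x)‖ ^ p ≤ AInt s x τ + GInt τ := by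
      intro τ hτ
      have hτ0 : 0 ≤ τ := hs.trans hτ.1
      have hμτ := hμpos τ hτ0
      have hu := hHb τ hτ0 (U τ s x)
      rw [hPU s τ hs hτ.1 x, hQU s τ hs hτ.1 x] at hu
      have hφ0 : 0 ≤ deriv μ τ / μ τ := div_nonneg (hμ'nn τ hτ0) hμτ.le
      have hα0 : 0 ≤ μ τ ^ γ * ‖U τ s (P s x)‖ :=
        mul_nonneg (Real.rpow_nonneg hμτ.le _) (norm_nonneg _)
      have hβ0 : 0 ≤ μ τ ^ (-γ) * ‖U τ s ((1 - P s) x)‖ :=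
        mul_nonneg (Real.rpow_nonneg hμτ.le _) (norm_nonneg _)
      calc ‖H τ (U τ s x)‖ ^ p
          ≤ ((deriv μ τ / μ τ) ^ (1/p) *
              (μ τ ^ γ * ‖U τ s (P s x)‖ + μ τ ^ (-γ) * ‖U τ s ((1 - P s) x)‖)) ^ p := by
            apply Real.rpow_le_rpow (norm_nonneg _) _ hp0.le
            calc ‖H τ (U τ s x)‖ ≤ _ := hu
              _ = (deriv μ τ / μ τ) ^ (1/p) *
                  (μ τ ^ γ * ‖U τ s (P s x)‖ + μ τ ^ (-γ) * ‖U τ s ((1 - P s) x)‖) := by ring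
        _ = (deriv μ τ / μ τ) ^ ((1/p)*p) *
              (μ τ ^ γ * ‖U τ s (P s x)‖ + μ τ ^ (-γ) * ‖U τ s ((1 - P s) x)‖) ^ p := by
            rw [Real.mul_rpow (Real.rpow_nonneg hφ0 _) (add_nonneg hα0 hβ0),
              ← Real.rpow_mul hφ0]
        _ = (deriv μ τ / μ τ) *
              (μ τ ^ γ * ‖U τ s (P s x)‖ + μ τ ^ (-γ) * ‖U τ s ((1 - P s) x)‖) ^ p := by
            rw [one_div, inv_mul_cancel₀ hpne, Real.rpow_one]
        _ ≤ (deriv μ τ / μ τ) * (2 ^ (p-1) * ((μ τ ^ γ * ‖U τ s (P s x)‖) ^ p +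
              (μ τ ^ (-γ) * ‖U τ s ((1 - P s) x)‖) ^ p)) :=
            mul_le_mul_of_nonneg_left (two_rpow_ineq hα0 hβ0 hp) hφ0
        _ = AInt s x τ + GInt τ := by
            simp only [hAIntdef, hGIntdef]
            rw [Real.mul_rpow (Real.rpow_nonneg hμτ.le _) (norm_nonneg _),
              Real.mul_rpow (Real.rpow_nonneg hμτ.le _) (norm_nonneg _),
              ← Real.rpow_mul hμτ.le, ← Real.rpow_mul hμτ.le,
              show μ τ ^ (p*γ - 1) = μ τ ^ (γ*p) / μ τ from by
                rw [show p*γ - 1 = γ*p - 1 from by ring, Real.rpow_sub hμτ, Real.rpow_one],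
              show μ τ ^ (-(p*γ) - 1) = μ τ ^ (-γ*p) / μ τ from by
                rw [show -(p*γ) - 1 = -γ*p - 1 from by ring, Real.rpow_sub hμτ, Real.rpow_one]]
            field_simp
    have hHle : (∫ τ in s..t, ‖H τ (U τ s x)‖ ^ p) ≤
        (∫ τ in s..t, AInt s x τ) + ∫ τ in s..t, GInt τ := by
      by_cases hi : IntervalIntegrable (fun τ => ‖H τ (U τ s x)‖ ^ p) volume s t
      · calc (∫ τ in s..t, ‖H τ (U τ s x)‖ ^ p) ≤ ∫ τ in s..t, (AInt s x τ + GInt τ) :=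
            intervalIntegral.integral_mono_on hst hi (hIh_II.add hGInt_II) hptw
          _ = _ := intervalIntegral.integral_add hIh_II hGInt_II
      · rw [intervalIntegral.integral_undef hi]
        exact add_nonneg hIh_nonneg hIg_nonneg
    show A t (U t s x) - B t (U t s x) + (∫ τ in s..t, ‖H τ (U τ s x)‖ ^ p) ≤ A s x - B s x
    linarith
  · -- (ii)
    intro t ht x
    constructor
    · have := hA_nonneg t ht (P t x)
      have h2 := hBproj t ht x
      simp only []
      rw [h2]
      linarith
    · have := hB_nonneg t ht ((1 - P t) x)
      have h2 := hAproj t ht x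
      simp only []
      rw [h2]
      linarith
  · -- (iii)
    intro t ht x
    have hμt := hμpos t ht
    have hmul : ∀ e₁ e₂ : ℝ, μ t ^ e₁ * μ t ^ e₂ = μ t ^ (e₁ + e₂) :=
      fun e₁ e₂ => (Real.rpow_add hμt _ _).symm
    have hN1p : (N₁ * μ t ^ ε * ‖x‖) ^ p = N₁ ^ p * μ t ^ (ε*p) * ‖x‖ ^ p := by
      rw [Real.mul_rpow (mul_nonneg hN₁0 (Real.rpow_nonneg hμt.le _)) (norm_nonneg _),
        Real.mul_rpow hN₁0 (Real.rpow_nonneg hμt.le _), ← Real.rpow_mul hμt.le]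
    have hN2p : (N₂ * μ t ^ ε * ‖x‖) ^ p = N₂ ^ p * μ t ^ (ε*p) * ‖x‖ ^ p := by
      rw [Real.mul_rpow (mul_nonneg hN₂0 (Real.rpow_nonneg hμt.le _)) (norm_nonneg _),
        Real.mul_rpow hN₂0 (Real.rpow_nonneg hμt.le _), ← Real.rpow_mul hμt.le]
    have h1 : μ t ^ (-(p*γ)) * A t x ≤
        2 ^ (p-1) * (N₁ ^ p / (p*(a-γ))) * μ t ^ (p*ε) * ‖x‖ ^ p := by
      calc μ t ^ (-(p*γ)) * A t x
          ≤ μ t ^ (-(p*γ)) * ((2 ^ (p-1) * (N₁ * μ t ^ ε * ‖x‖) ^ p * μ t ^ (a*p)) *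
              (μ t ^ (p*(γ-a)) / (p*(a-γ)))) :=
            mul_le_mul_of_nonneg_left (hA_le t ht x) (Real.rpow_nonneg hμt.le _)
        _ = 2 ^ (p-1) * N₁ ^ p * ‖x‖ ^ p / (p*(a-γ)) *
              (μ t ^ (-(p*γ)) * (μ t ^ (ε*p) * (μ t ^ (a*p) * μ t ^ (p*(γ-a))))) := by
            rw [hN1p]; ring
        _ = 2 ^ (p-1) * N₁ ^ p * ‖x‖ ^ p / (p*(a-γ)) * μ t ^ (p*ε) := by
            rw [hmul, hmul, hmul, show -(p*γ) + (ε*p + (a*p + p*(γ-a))) = p*ε from by ring]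
        _ = 2 ^ (p-1) * (N₁ ^ p / (p*(a-γ))) * μ t ^ (p*ε) * ‖x‖ ^ p := by ring
    have h2 : μ t ^ (p*γ) * B t x ≤
        2 ^ (p-1) * (N₂ ^ p / (p*(b-γ))) * μ t ^ (p*ε) * ‖x‖ ^ p := by
      calc μ t ^ (p*γ) * B t x
          ≤ μ t ^ (p*γ) * ((2 ^ (p-1) * (N₂ * μ t ^ ε * ‖x‖) ^ p * μ t ^ (-(b*p))) *
              (μ t ^ (p*(b-γ)) / (p*(b-γ)))) :=
            mul_le_mul_of_nonneg_left (hB_le t ht x) (Real.rpow_nonneg hμt.le _)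
        _ = 2 ^ (p-1) * N₂ ^ p * ‖x‖ ^ p / (p*(b-γ)) *
              (μ t ^ (p*γ) * (μ t ^ (ε*p) * (μ t ^ (-(b*p)) * μ t ^ (p*(b-γ))))) := by
            rw [hN2p]; ring
        _ = 2 ^ (p-1) * N₂ ^ p * ‖x‖ ^ p / (p*(b-γ)) * μ t ^ (p*ε) := by
            rw [hmul, hmul, hmul, show p*γ + (ε*p + (-(b*p) + p*(b-γ))) = p*ε from by ring]
        _ = 2 ^ (p-1) * (N₂ ^ p / (p*(b-γ))) * μ t ^ (p*ε) * ‖x‖ ^ p := by ring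
    calc μ t ^ (-(p * γ)) * (A t (P t x) - B t (P t x)) -
          μ t ^ (p * γ) * (A t ((1 - P t) x) - B t ((1 - P t) x))
        = μ t ^ (-(p*γ)) * A t x + μ t ^ (p*γ) * B t x := by
          rw [hBproj t ht x, hAproj t ht x, hAP t ht x, hBQ t ht x]; ring
      _ ≤ 2 ^ (p-1) * (N₁ ^ p / (p*(a-γ))) * μ t ^ (p*ε) * ‖x‖ ^ p +
          2 ^ (p-1) * (N₂ ^ p / (p*(b-γ))) * μ t ^ (p*ε) * ‖x‖ ^ p := add_le_add h1 h2
      _ = 2 ^ (p-1) * (N₁ ^ p / (p * (a - γ)) + N₂ ^ p / (p * (b - γ))) *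
          μ t ^ (p * ε) * ‖x‖ ^ p := by ring
end
end
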